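/- arXiv:0711.0676 — 5 statements merged into one kernel-verified Lean document; each statement's English description precedes it below -/
import Mathlib

section
/- Let p be a positive even integer, let 0 < a < 1/2, and let f be a positive definite trigonometric polynomial on the torus 𝕋 = ℝ/ℤ. Then (1/(2a)) ∫_{-a}^{a} |f(x)|^p dx ≥ (1/2) ∫_{-1/2}^{1/2} |f(x)|^p dx. -/
open MeasureTheory Finset intervalIntegral

private lemma sin_div_deriv (b : ℝ) (hb : b ≠ 0) (x : ℝ) :
    HasDerivAt (fun y : ℝ => Real.sin (b*y) / b) (Real.cos (b*x)) x := by
  have h : HasDerivAt (fun y : ℝ => Real.sin (b*y)) (Real.cos (b*x) * b) x := by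
    have := (Real.hasDerivAt_sin (b*x)).comp x ((hasDerivAt_id x).const_mul b)
    simpa [mul_comm, Function.comp_def] using this
  have := h.div_const b
  simpa [mul_div_assoc, mul_div_cancel_right₀ _ hb] using this

lemma cos_int_integral (m : ℤ) :
    ∫ x in (-(1/2) : ℝ)..(1/2 : ℝ), Real.cos (2*Real.pi*(m:ℝ)*x)
      = if m = 0 then 1 else 0 := by
  rcases eq_or_ne m 0 with h | h
  · subst h; norm_num
  · rw [if_neg h]
    set b : ℝ := 2*Real.pi*(m:ℝ) with hbdef
    have hb : b ≠ 0 := by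
      simp [hbdef, Real.pi_ne_zero, h]
    have key : ∫ x in (-(1/2) : ℝ)..(1/2 : ℝ), Real.cos (b*x)
        = Real.sin (b*(1/2))/b - Real.sin (b*(-(1/2)))/b := by
      refine integral_eq_sub_of_hasDerivAt (fun x _ => sin_div_deriv b hb x) ?_
      exact (Real.continuous_cos.comp (continuous_const.mul continuous_id)).intervalIntegrable _ _
    have h1 : Real.sin (b*(1/2)) = 0 := by
      have : b*(1/2) = (m:ℝ) * Real.pi := by rw [hbdef]; ring
      rw [this]; exact Real.sin_int_mul_pi m
    have h2 : Real.sin (b*(-(1/2))) = 0 := by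
      have : b*(-(1/2)) = ((-m : ℤ):ℝ) * Real.pi := by rw [hbdef]; push_cast; ring
      rw [this]; exact Real.sin_int_mul_pi (-m)
    have : ∀ x : ℝ, Real.cos (2*Real.pi*(m:ℝ)*x) = Real.cos (b*x) := fun x => rfl
    rw [key, h1, h2]; ring

private lemma cos_mul_deriv (b : ℝ) (x : ℝ) :
    HasDerivAt (fun y : ℝ => Real.sin (b*y)) (Real.cos (b*x) * b) x := by
  have := (Real.hasDerivAt_sin (b*x)).comp x ((hasDerivAt_id x).const_mul b)
  simpa [mul_comm, Function.comp_def] using this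

private lemma sin_mul_deriv (b : ℝ) (x : ℝ) :
    HasDerivAt (fun y : ℝ => Real.cos (b*y)) (-Real.sin (b*x) * b) x := by
  have := (Real.hasDerivAt_cos (b*x)).comp x ((hasDerivAt_id x).const_mul b)
  simpa [mul_comm, Function.comp_def] using this

lemma tri_half (a b : ℝ) (ha : 0 < a) :
    ∫ x in (-a)..a, (a - |x|) * Real.cos (b*x)
      = 2 * ∫ x in (0:ℝ)..a, (a - x) * Real.cos (b*x) := by
  have hcont : Continuous fun x : ℝ => (a - |x|) * Real.cos (b*x) :=
    (continuous_const.sub continuous_abs).mul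
      (Real.continuous_cos.comp (continuous_const.mul continuous_id))
  have hsplit : ∫ x in (-a)..a, (a - |x|) * Real.cos (b*x)
      = (∫ x in (-a)..(0:ℝ), (a - |x|) * Real.cos (b*x))
        + ∫ x in (0:ℝ)..a, (a - |x|) * Real.cos (b*x) := by
    rw [intervalIntegral.integral_add_adjacent_intervals
      (hcont.intervalIntegrable _ _) (hcont.intervalIntegrable _ _)]
  have heven : (fun x : ℝ => (a - |-x|) * Real.cos (b*(-x)))
      = fun x : ℝ => (a - |x|) * Real.cos (b*x) := by
    funext x; simp [abs_neg, mul_neg, Real.cos_neg]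
  have hneg : (∫ x in (-a)..(0:ℝ), (a - |x|) * Real.cos (b*x))
      = ∫ x in (0:ℝ)..a, (a - |x|) * Real.cos (b*x) := by
    rw [show (0:ℝ) = -0 by norm_num, ← intervalIntegral.integral_comp_neg
      (fun x => (a - |x|) * Real.cos (b*x))]
    simp only [heven]
    norm_num
  have hid : (∫ x in (0:ℝ)..a, (a - |x|) * Real.cos (b*x))
      = ∫ x in (0:ℝ)..a, (a - x) * Real.cos (b*x) := by
    apply intervalIntegral.integral_congr
    intro x hx
    rw [Set.uIcc_of_le ha.le] at hx
    simp only
    rw [abs_of_nonneg hx.1]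
  rw [hsplit, hneg, hid]; ring

lemma tri_eval (a : ℝ) (ha : 0 < a) (m : ℤ) :
    ∫ x in (-a)..a, (a - |x|) * Real.cos (2*Real.pi*(m:ℝ)*x)
      = if m = 0 then a^2
        else 2*(1 - Real.cos (2*Real.pi*(m:ℝ)*a))/(2*Real.pi*(m:ℝ))^2 := by
  set b : ℝ := 2*Real.pi*(m:ℝ) with hbdef
  rw [tri_half a b ha]
  rcases eq_or_ne m 0 with h | h
  · subst h
    rw [if_pos rfl]
    have : ∀ x : ℝ, (a - x) * Real.cos (b*x) = a - x := by
      intro x; simp [hbdef]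
    simp only [this]
    rw [intervalIntegral.integral_sub intervalIntegrable_const
      intervalIntegrable_id, intervalIntegral.integral_const, integral_id]
    simp
    ring
  · rw [if_neg h]
    have hb : b ≠ 0 := by simp [hbdef, Real.pi_ne_zero, h]
    have hder : ∀ x ∈ Set.uIcc (0:ℝ) a, HasDerivAt
        (fun y : ℝ => (a - y) * Real.sin (b*y) / b - Real.cos (b*y) / b^2)
        ((a - x) * Real.cos (b*x)) x := by
      intro x _
      have h1 : HasDerivAt (fun y : ℝ => a - y) (-1) x := (hasDerivAt_id x).const_sub a
      have h3 := (h1.mul (cos_mul_deriv b x)).div_const b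
      have h4 := (sin_mul_deriv b x).div_const (b^2)
      have : HasDerivAt (fun y : ℝ => (a - y) * Real.sin (b*y) / b - Real.cos (b*y) / b^2) _ x := h3.sub h4
      convert this using 1
      field_simp
      ring
    rw [intervalIntegral.integral_eq_sub_of_hasDerivAt hder
      (((continuous_const.sub continuous_id).mul
        (Real.continuous_cos.comp (continuous_const.mul continuous_id))).intervalIntegrable _ _)]
    simp [mul_comm b a]
    field_simp
    ring

private lemma re_term (r θ : ℝ) :
    ((r:ℂ) * Complex.exp ((θ:ℂ) * Complex.I)).re = r * Real.cos θ := by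
  rw [Complex.mul_re]
  simp [Complex.exp_ofReal_mul_I_re]

private lemma norm_sq_expand {ι : Type*} [DecidableEq ι] (s : Finset ι) (B : ι → ℝ) (K : ι → ℤ) (x : ℝ) :
    ‖∑ v ∈ s, (B v : ℂ) * Complex.exp (2 * Real.pi * Complex.I * (K v : ℂ) * (x:ℂ))‖^2
      = ∑ v ∈ s, ∑ w ∈ s, (B v * B w) * Real.cos (2*Real.pi*((K v - K w : ℤ):ℝ)*x) := by
  set z := ∑ v ∈ s, (B v : ℂ) * Complex.exp (2 * Real.pi * Complex.I * (K v : ℂ) * (x:ℂ)) with hz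
  have h1 : ‖z‖^2 = (z * (starRingEnd ℂ) z).re := by
    rw [Complex.mul_conj, Complex.ofReal_re, Complex.normSq_eq_norm_sq]
  rw [h1, hz, map_sum, Finset.sum_mul_sum, Complex.re_sum]
  refine Finset.sum_congr rfl fun v _ => ?_
  rw [Complex.re_sum]
  refine Finset.sum_congr rfl fun w _ => ?_
  have hc : (starRingEnd ℂ) (2 * (Real.pi:ℂ) * Complex.I * (K w : ℂ) * (x:ℂ))
      = -(2 * (Real.pi:ℂ) * Complex.I * (K w : ℂ) * (x:ℂ)) := by
    simp only [map_mul, Complex.conj_ofReal, Complex.conj_I, map_ofNat, map_intCast]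
    ring
  have hconj : (starRingEnd ℂ) ((B w : ℂ) * Complex.exp (2 * Real.pi * Complex.I * (K w : ℂ) * (x:ℂ)))
      = (B w : ℂ) * Complex.exp (-(2 * Real.pi * Complex.I * (K w : ℂ) * (x:ℂ))) := by
    rw [map_mul, Complex.conj_ofReal, ← Complex.exp_conj, hc]
  rw [hconj]
  have hexp : Complex.exp (2 * Real.pi * Complex.I * (K v : ℂ) * (x:ℂ)) *
      Complex.exp (-(2 * Real.pi * Complex.I * (K w : ℂ) * (x:ℂ))) =
      Complex.exp (((2*Real.pi*((K v - K w : ℤ):ℝ)*x : ℝ):ℂ) * Complex.I) := by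
    rw [← Complex.exp_add]
    congr 1
    push_cast
    ring
  calc ((B v : ℂ) * Complex.exp (2 * Real.pi * Complex.I * (K v : ℂ) * (x:ℂ))
      * ((B w : ℂ) * Complex.exp (-(2 * Real.pi * Complex.I * (K w : ℂ) * (x:ℂ))))).re
      = (((B v * B w : ℝ):ℂ) * (Complex.exp (2 * Real.pi * Complex.I * (K v : ℂ) * (x:ℂ)) *
          Complex.exp (-(2 * Real.pi * Complex.I * (K w : ℂ) * (x:ℂ))))).re := by
        push_cast; ring_nf
    _ = (B v * B w) * Real.cos (2*Real.pi*((K v - K w : ℤ):ℝ)*x) := by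
        rw [hexp, re_term]

private lemma pow_expand (H : Finset ℤ) (c : ℤ → ℝ) (q : ℕ) (x : ℝ) :
    (∑ k ∈ H, (c k : ℂ) * Complex.exp (2 * Real.pi * Complex.I * (k : ℂ) * (x : ℂ)))^q
      = ∑ v ∈ Fintype.piFinset (fun _ : Fin q => H),
          ((∏ t, c (v t) : ℝ) : ℂ) *
            Complex.exp (2 * Real.pi * Complex.I * ((∑ t, v t : ℤ) : ℂ) * (x : ℂ)) := by
  have h1 : (∑ k ∈ H, (c k : ℂ) * Complex.exp (2 * Real.pi * Complex.I * (k : ℂ) * (x : ℂ)))^q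
      = ∏ _t : Fin q, ∑ k ∈ H, (c k : ℂ) * Complex.exp (2 * Real.pi * Complex.I * (k : ℂ) * (x : ℂ)) := by
    rw [Finset.prod_const, Finset.card_univ, Fintype.card_fin]
  rw [h1, Finset.prod_univ_sum]
  refine Finset.sum_congr rfl fun v _ => ?_
  rw [Finset.prod_mul_distrib, ← Complex.exp_sum]
  congr 1
  · push_cast; rfl
  · have : ∀ t : Fin q, 2 * (Real.pi:ℂ) * Complex.I * ((v t : ℤ) : ℂ) * (x:ℂ)
        = (2 * (Real.pi:ℂ) * Complex.I * (x:ℂ)) * ((v t : ℤ) : ℂ) := fun t => by ring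
    simp only [this]
    rw [← Finset.mul_sum]
    push_cast
    ring

section

/-- **Wiener–Shapiro inequality.** For `p` a positive even integer, `0 < a < 1/2`,
and `f` a positive definite trigonometric polynomial (nonnegative Fourier
coefficients `c k` on a finite spectrum `H ⊆ ℤ`), we have
`(1/(2a)) ∫_{-a}^{a} |f|^p ≥ (1/2) ∫_{-1/2}^{1/2} |f|^p`. -/
theorem wiener_shapiro_inequality
    (p : ℕ) (hp_even : Even p) (hp_pos : 0 < p)
    (a : ℝ) (ha : 0 < a) (ha' : a < 1 / 2)
    (H : Finset ℤ) (c : ℤ → ℝ) (hc : ∀ k ∈ H, 0 ≤ c k)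
    (f : ℝ → ℂ)
    (hf : ∀ x : ℝ, f x =
      ∑ k ∈ H, (c k : ℂ) * Complex.exp (2 * Real.pi * Complex.I * (k : ℂ) * (x : ℂ))) :
    (1 / 2 : ℝ) * ∫ x in (-(1 / 2) : ℝ)..(1 / 2 : ℝ), ‖f x‖ ^ p ≤
      (1 / (2 * a)) * ∫ x in (-a)..a, ‖f x‖ ^ p := by
  classical
  obtain ⟨q, hq⟩ := hp_even
  set S : Finset (Fin q → ℤ) := Fintype.piFinset (fun _ => H) with hS
  set B : (Fin q → ℤ) → ℝ := fun v => ∏ t, c (v t) with hBdef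
  set K : (Fin q → ℤ) → ℤ := fun v => ∑ t, v t with hKdef
  have hB : ∀ v ∈ S, 0 ≤ B v := fun v hv =>
    Finset.prod_nonneg fun t _ => hc _ (Fintype.mem_piFinset.mp hv t)
  -- pointwise expansion of ‖f x‖^p
  have hnorm : ∀ x : ℝ, ‖f x‖^p
      = ∑ v ∈ S, ∑ w ∈ S, (B v * B w) * Real.cos (2*Real.pi*((K v - K w : ℤ):ℝ)*x) := by
    intro x
    have h0 : ‖f x‖^p = ‖(f x)^q‖^2 := by
      rw [norm_pow, ← pow_mul, mul_two, ← hq]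
    rw [h0, hf x, pow_expand H c q x, ← hS]
    exact norm_sq_expand S B K x
  -- continuity
  have hcontterm : ∀ (m : ℤ), Continuous fun x : ℝ => Real.cos (2*Real.pi*(m:ℝ)*x) := by
    intro m; fun_prop
  have hFcont : Continuous fun x : ℝ => ‖f x‖^p := by
    have h : Continuous fun x : ℝ =>
        ∑ v ∈ S, ∑ w ∈ S, (B v * B w) * Real.cos (2*Real.pi*((K v - K w : ℤ):ℝ)*x) := by
      apply continuous_finset_sum; intro v _
      apply continuous_finset_sum; intro w _
      exact continuous_const.mul (hcontterm _)
    exact h.congr fun x => (hnorm x).symm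
  -- the big-interval integral
  have hI1 : ∫ x in (-(1/2) : ℝ)..(1/2 : ℝ), ‖f x‖^p
      = ∑ v ∈ S, ∑ w ∈ S, (B v * B w) * (if K v = K w then (1:ℝ) else 0) := by
    simp only [hnorm]
    rw [intervalIntegral.integral_finset_sum (fun v _ =>
      ((show Continuous fun x : ℝ => ∑ w ∈ S, (B v * B w) * Real.cos (2*Real.pi*((K v - K w : ℤ):ℝ)*x) from
        continuous_finset_sum S (fun w _ => continuous_const.mul (hcontterm (K v - K w)))).intervalIntegrable _ _))]
    refine Finset.sum_congr rfl fun v _ => ?_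
    rw [intervalIntegral.integral_finset_sum (fun w _ =>
      ((show Continuous fun x : ℝ => (B v * B w) * Real.cos (2*Real.pi*((K v - K w : ℤ):ℝ)*x) from
        continuous_const.mul (hcontterm (K v - K w))).intervalIntegrable _ _))]
    refine Finset.sum_congr rfl fun w _ => ?_
    rw [intervalIntegral.integral_const_mul, cos_int_integral (K v - K w)]
    congr 1
    simp [sub_eq_zero]
  -- the triangle-weighted integral
  have hI2 : ∫ x in (-a)..a, (a - |x|) * ‖f x‖^p
      = ∑ v ∈ S, ∑ w ∈ S, (B v * B w) *
          (if K v - K w = 0 then a^2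
            else 2*(1 - Real.cos (2*Real.pi*((K v - K w : ℤ):ℝ)*a))/(2*Real.pi*((K v - K w : ℤ):ℝ))^2) := by
    simp only [hnorm, Finset.mul_sum]
    rw [intervalIntegral.integral_finset_sum (fun v _ =>
      ((show Continuous fun x : ℝ => ∑ w ∈ S, (a - |x|) * ((B v * B w) * Real.cos (2*Real.pi*((K v - K w : ℤ):ℝ)*x)) from
        continuous_finset_sum S (fun w _ =>
        ((continuous_const.sub continuous_abs).mul (continuous_const.mul (hcontterm (K v - K w)))))).intervalIntegrable _ _))]
    refine Finset.sum_congr rfl fun v _ => ?_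
    rw [intervalIntegral.integral_finset_sum (fun w _ =>
      ((show Continuous fun x : ℝ => (a - |x|) * ((B v * B w) * Real.cos (2*Real.pi*((K v - K w : ℤ):ℝ)*x)) from
        (continuous_const.sub continuous_abs).mul (continuous_const.mul (hcontterm (K v - K w)))).intervalIntegrable _ _))]
    refine Finset.sum_congr rfl fun w _ => ?_
    have hcomm : ∀ x : ℝ, (a - |x|) * ((B v * B w) * Real.cos (2*Real.pi*((K v - K w : ℤ):ℝ)*x))
        = (B v * B w) * ((a - |x|) * Real.cos (2*Real.pi*((K v - K w : ℤ):ℝ)*x)) := fun x => by ring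
    simp only [hcomm]
    rw [intervalIntegral.integral_const_mul, tri_eval a ha (K v - K w)]
  -- pointwise bound and monotonicity
  have hmono : ∫ x in (-a)..a, (a - |x|) * ‖f x‖^p ≤ ∫ x in (-a)..a, a * ‖f x‖^p := by
    apply intervalIntegral.integral_mono_on (by linarith)
      (((continuous_const.sub continuous_abs).mul hFcont).intervalIntegrable _ _)
      ((continuous_const.mul hFcont).intervalIntegrable _ _)
    intro x _
    have h1 : a - |x| ≤ a := by
      have := abs_nonneg x; linarith
    have h2 : (0:ℝ) ≤ ‖f x‖^p := by positivity
    exact mul_le_mul_of_nonneg_right h1 h2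
  -- term-by-term lower bound for the triangle sum
  have hterm : a^2 * (∑ v ∈ S, ∑ w ∈ S, (B v * B w) * (if K v = K w then (1:ℝ) else 0))
      ≤ ∑ v ∈ S, ∑ w ∈ S, (B v * B w) *
          (if K v - K w = 0 then a^2
            else 2*(1 - Real.cos (2*Real.pi*((K v - K w : ℤ):ℝ)*a))/(2*Real.pi*((K v - K w : ℤ):ℝ))^2) := by
    rw [Finset.mul_sum]
    refine Finset.sum_le_sum fun v hv => ?_
    rw [Finset.mul_sum]
    refine Finset.sum_le_sum fun w hw => ?_
    have hBvw : 0 ≤ B v * B w := mul_nonneg (hB v hv) (hB w hw)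
    by_cases h : K v = K w
    · rw [if_pos h, if_pos (by rw [h, sub_self])]
      ring_nf
      exact le_refl _
    · rw [if_neg h, if_neg (fun hx => h (by linarith [sub_eq_zero.mp hx] <;> omega))]
      have hnum : (0:ℝ) ≤ 1 - Real.cos (2*Real.pi*((K v - K w : ℤ):ℝ)*a) := by
        linarith [Real.cos_le_one (2*Real.pi*((K v - K w : ℤ):ℝ)*a)]
      have : (0:ℝ) ≤ (B v * B w) *
          (2*(1 - Real.cos (2*Real.pi*((K v - K w : ℤ):ℝ)*a))/(2*Real.pi*((K v - K w : ℤ):ℝ))^2) := by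
        apply mul_nonneg hBvw
        apply div_nonneg (by linarith) (sq_nonneg _)
      simpa using this
  -- put it together
  set X := ∑ v ∈ S, ∑ w ∈ S, (B v * B w) * (if K v = K w then (1:ℝ) else 0) with hX
  set Y := ∫ x in (-a)..a, ‖f x‖^p with hY
  have hchain : a^2 * X ≤ a * Y := by
    calc a^2 * X ≤ _ := hterm
      _ = ∫ x in (-a)..a, (a - |x|) * ‖f x‖^p := hI2.symm
      _ ≤ ∫ x in (-a)..a, a * ‖f x‖^p := hmono
      _ = a * Y := by rw [intervalIntegral.integral_const_mul]
  have haX : a * X ≤ Y := by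
    have h' : a * (a * X) ≤ a * Y := by nlinarith [hchain]
    exact le_of_mul_le_mul_left h' ha
  rw [hI1]
  calc (1/2 : ℝ) * X = (1/(2*a)) * (a * X) := by field_simp
    _ ≤ (1/(2*a)) * Y := by
        apply mul_le_mul_of_nonneg_left haX
        positivity
end
end

section
/- Let p be a positive even integer and let k > 2 be an integer. For every 0 < a < 1/k and every b > 1/k there exists an idempotent trigonometric polynomial f such that ∫_{-a}^{a} |f(x)|^p dx ≤ b · ∫_{-1/2}^{1/2} |f(x)|^p dx. In particular, the constant 1/2 in Wiener–Shapiro's inequality cannot be improved, even among idempotents. -/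
set_option maxHeartbeats 1000000

open MeasureTheory Finset Complex Real


noncomputable def Dker (N : ℕ) (x : ℝ) : ℂ :=
  ∑ j ∈ Finset.range N, Complex.exp (2 * Real.pi * Complex.I * (j : ℂ) * (x : ℂ))

lemma Dker_periodic (N : ℕ) : Function.Periodic (Dker N) 1 := by
  intro x
  unfold Dker
  refine Finset.sum_congr rfl fun j _ => ?_
  have : (2 * (Real.pi:ℂ) * Complex.I * (j : ℂ) * ((x:ℝ) + 1 : ℝ))
      = 2 * (Real.pi:ℂ) * Complex.I * (j : ℂ) * (x : ℂ) + ((j:ℤ):ℂ) * (2 * Real.pi * Complex.I) := by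
    push_cast; ring
  rw [this, Complex.exp_add, Complex.exp_int_mul_two_pi_mul_I (j:ℤ), mul_one]

lemma Dker_continuous (N : ℕ) : Continuous (Dker N) := by
  unfold Dker
  exact continuous_finset_sum _ fun j _ => by fun_prop

lemma norm_exp_mul_I_sub_one (θ : ℝ) :
    ‖Complex.exp ((θ:ℂ) * Complex.I) - 1‖ = 2 * |Real.sin (θ / 2)| := by
  rw [Complex.exp_mul_I]
  have : Complex.cos θ + Complex.sin θ * Complex.I - 1
      = ((Real.cos θ - 1 : ℝ) : ℂ) + ((Real.sin θ : ℝ) : ℂ) * Complex.I := by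
    push_cast [← Complex.ofReal_cos, ← Complex.ofReal_sin]; ring
  rw [this]
  rw [Complex.norm_def, Complex.normSq_add_mul_I]
  have h : (Real.cos θ - 1) ^ 2 + Real.sin θ ^ 2 = (2 * |Real.sin (θ / 2)|) ^ 2 := by
    have h1 : Real.sin (θ/2) ^ 2 = 1 / 2 - Real.cos θ / 2 := by
      have := Real.sin_sq_eq_half_sub (θ/2)
      rw [show 2 * (θ/2) = θ by ring] at this
      exact this
    have h2 : Real.sin θ ^ 2 = 1 - Real.cos θ ^ 2 := by
      have := Real.sin_sq_add_cos_sq θ; linarith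
    rw [mul_pow, _root_.sq_abs, h1, h2]
    ring
  rw [h, Real.sqrt_sq (by positivity)]


lemma abs_sin_pi_mul_ge {x : ℝ} (hx : |x| ≤ 1/2) : 2 * |x| ≤ |Real.sin (Real.pi * x)| := by
  have key : ∀ y : ℝ, 0 ≤ y → y ≤ 1/2 → 2 * y ≤ Real.sin (Real.pi * y) := by
    intro y hy hy2
    have := Real.mul_le_sin (x := Real.pi * y) (by positivity)
      (by nlinarith [Real.pi_pos])
    calc 2 * y = 2 / Real.pi * (Real.pi * y) := by
          rw [div_mul_eq_mul_div, mul_comm Real.pi y, ← mul_assoc]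
          rw [mul_div_assoc, div_self Real.pi_ne_zero, mul_one]
      _ ≤ Real.sin (Real.pi * y) := this
    
  rcases le_or_gt 0 x with h | h
  · rw [_root_.abs_of_nonneg h]
    have h1 := key x h (by rwa [_root_.abs_of_nonneg h] at hx)
    have h2 : 0 ≤ Real.sin (Real.pi * x) := by linarith
    rw [_root_.abs_of_nonneg h2]; exact h1
  · rw [_root_.abs_of_neg h]
    have h1 := key (-x) (by linarith) (by rwa [_root_.abs_of_neg h] at hx)
    rw [show Real.pi * -x = -(Real.pi * x) by ring, Real.sin_neg] at h1
    have h2 : Real.sin (Real.pi * x) ≤ 0 := by linarith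
    rw [_root_.abs_of_nonpos h2]; exact h1

lemma Dker_norm_le (N : ℕ) {x : ℝ} (hx : |x| ≤ 1/2) (hx0 : x ≠ 0) :
    ‖Dker N x‖ ≤ 1 / (2 * |x|) := by
  set z : ℂ := Complex.exp (((2 * Real.pi * x : ℝ) : ℂ) * Complex.I) with hz
  have hnorm : ‖z - 1‖ = 2 * |Real.sin (Real.pi * x)| := by
    rw [hz, norm_exp_mul_I_sub_one]
    norm_num
    ring_nf
  have hsin : 2 * |x| ≤ |Real.sin (Real.pi * x)| := abs_sin_pi_mul_ge hx
  have habs : 0 < |x| := abs_pos.mpr hx0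
  have hz1 : z ≠ 1 := by
    intro h
    rw [h] at hnorm
    simp at hnorm
    have := abs_sin_pi_mul_ge hx
    rw [hnorm] at this
    simp at this
    nlinarith
  have hD : Dker N x = (z ^ N - 1) / (z - 1) := by
    rw [← geom_sum_eq hz1]
    unfold Dker
    refine Finset.sum_congr rfl fun j _ => ?_
    rw [← Complex.exp_nat_mul]
    congr 1
    push_cast
    ring
  rw [hD]
  rw [norm_div]
  have hzn : ‖z ^ N - 1‖ ≤ 2 := by
    calc ‖z ^ N - 1‖ ≤ ‖z ^ N‖ + ‖(1:ℂ)‖ := norm_sub_le _ _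
      _ ≤ 2 := by
          rw [norm_pow, hz, Complex.norm_exp_ofReal_mul_I]
          norm_num
  have h4 : 4 * |x| ≤ ‖z - 1‖ := by rw [hnorm]; linarith
  have hpos : (0:ℝ) < ‖z - 1‖ := by linarith
  rw [div_le_div_iff₀ hpos (by positivity)]
  nlinarith


lemma Dker_norm_ge (N : ℕ) (hN : 1 ≤ N) {x : ℝ} (hx : |x| ≤ 1 / (8 * N)) :
    (N : ℝ) / 2 ≤ ‖Dker N x‖ := by
  have hre : (N : ℝ) / 2 ≤ (Dker N x).re := by
    unfold Dker
    rw [Complex.re_sum]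
    have : ∀ j ∈ Finset.range N,
        (1:ℝ)/2 ≤ (Complex.exp (2 * Real.pi * Complex.I * (j : ℂ) * (x : ℂ))).re := by
      intro j hj
      have harg : (2 * (Real.pi:ℂ) * Complex.I * (j : ℂ) * (x : ℂ))
          = ((2 * Real.pi * j * x : ℝ) : ℂ) * Complex.I := by push_cast; ring
      rw [harg, Complex.exp_ofReal_mul_I_re]
      set t := 2 * Real.pi * j * x with ht
      have hj' : (j : ℝ) ≤ (N : ℝ) := by exact_mod_cast (Finset.mem_range.mp hj).le
      have hNpos : (0:ℝ) < N := by exact_mod_cast hN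
      have habs : |t| ≤ Real.pi / 3 := by
        rw [ht, abs_mul]
        have h1 : |2 * Real.pi * (j:ℝ)| = 2 * Real.pi * j := by
          rw [_root_.abs_of_nonneg]; positivity
        rw [h1]
        have : 2 * Real.pi * (j:ℝ) * |x| ≤ 2 * Real.pi * N * (1 / (8 * N)) := by
          apply mul_le_mul (by nlinarith [Real.pi_pos]) hx (abs_nonneg x) (by positivity)
        calc 2 * Real.pi * (j:ℝ) * |x| ≤ 2 * Real.pi * N * (1 / (8 * N)) := this
          _ = Real.pi / 4 := by field_simp; ring
          _ ≤ Real.pi / 3 := by nlinarith [Real.pi_pos]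
      have : Real.cos (Real.pi / 3) ≤ Real.cos |t| := by
        apply Real.cos_le_cos_of_nonneg_of_le_pi (abs_nonneg t) (by nlinarith [Real.pi_pos])
        exact habs
      rw [Real.cos_pi_div_three, Real.cos_abs] at this
      linarith
    calc (N:ℝ)/2 = ∑ _j ∈ Finset.range N, (1:ℝ)/2 := by
          simp; ring
      _ ≤ _ := Finset.sum_le_sum this
  calc (N:ℝ)/2 ≤ (Dker N x).re := hre
    _ ≤ |(Dker N x).re| := le_abs_self _
    _ ≤ ‖Dker N x‖ := Complex.abs_re_le_norm _


lemma g_cont (N p : ℕ) : Continuous fun x => ‖Dker N x‖ ^ p :=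
  ((Dker_continuous N).norm.pow p)

lemma g_intble (N p : ℕ) (t₁ t₂ : ℝ) :
    IntervalIntegrable (fun x => ‖Dker N x‖ ^ p) volume t₁ t₂ :=
  (g_cont N p).intervalIntegrable _ _

lemma T_lower (N p : ℕ) (hN : 1 ≤ N) (hp : 2 ≤ p) :
    (N : ℝ) / (4 * 2 ^ p) ≤ ∫ x in (-(1/2) : ℝ)..(1/2 : ℝ), ‖Dker N x‖ ^ p := by
  have hNpos : (0:ℝ) < N := by exact_mod_cast hN
  have hN1 : (1:ℝ) ≤ N := by exact_mod_cast hN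
  set c : ℝ := 1 / (8 * N) with hc
  have hcpos : 0 < c := by positivity
  have hc2 : c ≤ 1/2 := by
    rw [hc]
    rw [div_le_div_iff₀ (by positivity) (by norm_num)]
    linarith
  have step1 : ∫ x in (-c)..c, ‖Dker N x‖ ^ p ≤ ∫ x in (-(1/2):ℝ)..(1/2:ℝ), ‖Dker N x‖ ^ p := by
    apply intervalIntegral.integral_mono_interval (by linarith) (by linarith) hc2
    · filter_upwards with x using by positivity
    · exact g_intble N p _ _
  have step2 : ((N:ℝ)/2)^p * (2*c) ≤ ∫ x in (-c)..c, ‖Dker N x‖ ^ p := by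
    have := intervalIntegral.integral_mono_on (f := fun _ : ℝ => ((N:ℝ)/2)^p)
      (g := fun x => ‖Dker N x‖ ^ p) (by linarith : -c ≤ c)
      (intervalIntegrable_const) (g_intble N p _ _) ?_
    · rw [intervalIntegral.integral_const] at this
      calc ((N:ℝ)/2)^p * (2*c) = (c - -c) • ((N:ℝ)/2)^p := by simp [smul_eq_mul]; ring
        _ ≤ _ := this
    · intro x hx
      apply pow_le_pow_left₀ (by positivity)
      apply Dker_norm_ge N hN
      rw [abs_le]
      exact ⟨by simpa [hc] using hx.1, by simpa [hc] using hx.2⟩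
  have key : (N:ℝ) / (4 * 2^p) ≤ ((N:ℝ)/2)^p * (2*c) := by
    have h1 : ((N:ℝ)/2)^p * (2*c) = (N:ℝ)^p / (2^p * 4 * N) := by
      rw [hc, div_pow]; field_simp; ring
    rw [h1]
    rw [div_le_div_iff₀ (by positivity) (by positivity)]
    have h2 : (N:ℝ)^2 ≤ (N:ℝ)^p := pow_le_pow_right₀ hN1 hp
    have h3 := mul_le_mul_of_nonneg_left h2 (le_of_lt (by positivity : (0:ℝ) < 4 * 2^p))
    nlinarith [h3]
  linarith


/-- **Sharpness of the constant 1/2 in the Wiener–Shapiro inequality, even for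
idempotents.** For `p` a positive even integer and an integer `k > 2`, for every
`0 < a < 1/k` and every `b > 1/k` there exists a (nonzero) idempotent
trigonometric polynomial `f = ∑_{h ∈ H} e_h` such that
`∫_{-a}^{a} |f|^p ≤ b ∫_{-1/2}^{1/2} |f|^p`. -/
theorem wiener_shapiro_sharp
    (p : ℕ) (hp_even : Even p) (hp_pos : 0 < p)
    (k : ℕ) (hk : 2 < k)
    (a : ℝ) (ha : 0 < a) (hak : a < 1 / k)
    (b : ℝ) (hb : 1 / k < b) :
    ∃ H : Finset ℤ, H.Nonempty ∧
      (∫ x in (-a)..a,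
          ‖∑ h ∈ H, Complex.exp (2 * Real.pi * Complex.I * (h : ℂ) * (x : ℂ))‖ ^ p) ≤
        b * ∫ x in (-(1 / 2) : ℝ)..(1 / 2 : ℝ),
          ‖∑ h ∈ H, Complex.exp (2 * Real.pi * Complex.I * (h : ℂ) * (x : ℂ))‖ ^ p := by
  have hp2 : 2 ≤ p := by
    rcases hp_even with ⟨m, rfl⟩
    omega
  have hK : (0:ℝ) < (k:ℝ) := by
    have : 0 < k := by omega
    exact_mod_cast this
  have hKne : (k:ℝ) ≠ 0 := hK.ne'
  have hka : (k:ℝ) * a < 1 := by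
    rw [one_div] at hak
    calc (k:ℝ) * a < (k:ℝ) * ((k:ℝ))⁻¹ := mul_lt_mul_of_pos_left hak hK
      _ = 1 := mul_inv_cancel₀ hKne
  have hδ : 0 < 1 - (k:ℝ) * a := by linarith
  set Ctail : ℝ := (1 / (2 * (1 - (k:ℝ) * a))) ^ p with hCdef
  have hC : 0 ≤ Ctail := by positivity
  have hε : 0 < b - 1/(k:ℝ) := sub_pos.mpr hb
  set R : ℝ := 2 * Ctail / ((k:ℝ) * (b - 1/(k:ℝ))) with hRdef
  have hR : 0 ≤ R := by positivity
  obtain ⟨M, hM⟩ := exists_nat_ge (4 * 2 ^ p * R)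
  set N : ℕ := max M 1 with hNdef
  have hN1 : 1 ≤ N := le_max_right _ _
  have hNM : (4:ℝ) * 2 ^ p * R ≤ N := by
    calc (4:ℝ) * 2 ^ p * R ≤ M := hM
      _ ≤ N := by exact_mod_cast le_max_left M 1
  refine ⟨(Finset.range N).image (fun j : ℕ => (j : ℤ) * k), ?_, ?_⟩
  · exact (Finset.nonempty_range_iff.mpr (by omega)).image _
  have hsum : ∀ x : ℝ, ∑ h ∈ (Finset.range N).image (fun j : ℕ => (j : ℤ) * k),
      Complex.exp (2 * Real.pi * Complex.I * (h : ℂ) * (x : ℂ)) = Dker N ((k:ℝ) * x) := by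
    intro x
    rw [Finset.sum_image (by
      intro y _ z _ h
      have hk0 : (k:ℤ) ≠ 0 := by exact_mod_cast (by omega : k ≠ 0)
      exact_mod_cast mul_right_cancel₀ hk0 h)]
    unfold Dker
    refine Finset.sum_congr rfl fun j _ => ?_
    congr 1
    push_cast
    ring
  simp only [hsum]
  set g : ℝ → ℝ := fun x => ‖Dker N x‖ ^ p with hg
  have gnn : ∀ x, 0 ≤ g x := fun x => by positivity
  set T : ℝ := ∫ x in (-(1/2) : ℝ)..(1/2 : ℝ), g x with hT
  have hT1 : (N : ℝ) / (4 * 2 ^ p) ≤ T := T_lower N p hN1 hp2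
  have hTR : R ≤ T := by
    have : R ≤ (N:ℝ) / (4 * 2^p) := by
      rw [le_div_iff₀ (by positivity)]
      linarith [hNM]
    linarith
  have hTpos : 0 < T := by
    have h0 : (0:ℝ) < (N:ℝ) := by exact_mod_cast hN1
    have : (0:ℝ) < (N:ℝ) / (4 * 2^p) := by positivity
    linarith
  -- LHS substitution
  have hLHS : (∫ x in (-a)..a, g ((k:ℝ) * x))
      = ((k:ℝ))⁻¹ * ∫ t in (-((k:ℝ)*a))..((k:ℝ)*a), g t := by
    rw [intervalIntegral.integral_comp_mul_left g hKne, smul_eq_mul, mul_neg]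
  -- RHS substitution
  have gper : Function.Periodic g 1 := by
    intro x
    simp only [hg]
    rw [Dker_periodic N x]
  have hRHS : (∫ x in (-(1/2):ℝ)..(1/2:ℝ), g ((k:ℝ) * x)) = T := by
    rw [intervalIntegral.integral_comp_mul_left g hKne]
    have h1 : (k:ℝ) * (1/2 : ℝ) = (k:ℝ) * (-(1/2)) + (k:ℤ) • (1:ℝ) := by
      rw [zsmul_eq_mul]
      push_cast
      ring
    rw [h1, gper.intervalIntegral_add_zsmul_eq (k:ℤ) ((k:ℝ) * (-(1/2))) (g_intble N p),
      gper.intervalIntegral_add_eq ((k:ℝ) * (-(1/2))) (-(1/2))]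
    have h2 : (-(1/2) : ℝ) + 1 = 1/2 := by norm_num
    rw [h2, zsmul_eq_mul, ← hT, smul_eq_mul]
    push_cast
    field_simp
  rw [hLHS, hRHS]
  -- tail bound
  have htail : (∫ t in (-((k:ℝ)*a))..((k:ℝ)*a), g t) ≤ T + 2 * Ctail := by
    have hbnd : ∀ t : ℝ, 1/2 ≤ |t| → |t| ≤ (k:ℝ) * a → g t ≤ Ctail := by
      intro t h1 h2
      have hgt : ∃ s : ℝ, g t = g s ∧ 1 - (k:ℝ)*a ≤ |s| ∧ |s| ≤ 1/2 := by
        rcases le_or_gt 0 t with hpos | hneg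
        · rw [_root_.abs_of_nonneg hpos] at h1 h2
          refine ⟨t - 1, ?_, ?_, ?_⟩
          · have := gper (t - 1)
            rw [sub_add_cancel] at this
            exact this
          · rw [_root_.abs_of_nonpos (by linarith : t - 1 ≤ 0)]
            linarith
          · rw [_root_.abs_of_nonpos (by linarith : t - 1 ≤ 0)]
            linarith
        · rw [_root_.abs_of_neg hneg] at h1 h2
          refine ⟨t + 1, ?_, ?_, ?_⟩
          · exact (gper t).symm
          · rw [_root_.abs_of_nonneg (by linarith : 0 ≤ t + 1)]
            linarith
          · rw [_root_.abs_of_nonneg (by linarith : 0 ≤ t + 1)]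
            linarith
      obtain ⟨s, hgs, hs1, hs2⟩ := hgt
      rw [hgs]
      have hs0 : s ≠ 0 := by
        intro h
        rw [h, abs_zero] at hs1
        linarith
      have hDs := Dker_norm_le N hs2 hs0
      have habs : 0 < |s| := abs_pos.mpr hs0
      calc g s ≤ (1/(2*|s|))^p := pow_le_pow_left₀ (norm_nonneg _) hDs p
        _ ≤ Ctail := by
            rw [hCdef]
            apply pow_le_pow_left₀ (by positivity)
            apply one_div_le_one_div_of_le (by positivity)
            linarith
    have hkann : (0:ℝ) ≤ (k:ℝ) * a := by positivity
    rcases le_or_gt ((k:ℝ)*a) (1/2) with hsmall | hbig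
    · have h := intervalIntegral.integral_mono_interval
        (by linarith : -(1/2:ℝ) ≤ -((k:ℝ)*a)) (by linarith : -((k:ℝ)*a) ≤ (k:ℝ)*a) hsmall
        (Filter.Eventually.of_forall gnn) (g_intble N p (-(1/2:ℝ)) (1/2))
      rw [← hT] at h
      linarith
    · have hsplit1 := intervalIntegral.integral_add_adjacent_intervals
        (g_intble N p (-((k:ℝ)*a)) (-(1/2))) (g_intble N p (-(1/2)) ((k:ℝ)*a))
      have hsplit2 := intervalIntegral.integral_add_adjacent_intervals
        (g_intble N p (-(1/2)) (1/2)) (g_intble N p (1/2) ((k:ℝ)*a))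
      have htail1 : (∫ t in (1/2:ℝ)..((k:ℝ)*a), g t) ≤ Ctail := by
        have hmono := intervalIntegral.integral_mono_on (μ := volume) hbig.le
          (g_intble N p (1/2) ((k:ℝ)*a)) intervalIntegrable_const
          (fun x hx => hbnd x
            (by rw [_root_.abs_of_nonneg (by linarith [hx.1] : (0:ℝ) ≤ x)]; exact hx.1)
            (by rw [_root_.abs_of_nonneg (by linarith [hx.1] : (0:ℝ) ≤ x)]; exact hx.2))
        rw [intervalIntegral.integral_const, smul_eq_mul] at hmono
        nlinarith [hmono]
      have htail2 : (∫ t in (-((k:ℝ)*a))..(-(1/2:ℝ)), g t) ≤ Ctail := by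
        have hmono := intervalIntegral.integral_mono_on (μ := volume)
          (by linarith : -((k:ℝ)*a) ≤ -(1/2:ℝ))
          (g_intble N p (-((k:ℝ)*a)) (-(1/2))) intervalIntegrable_const
          (fun x hx => hbnd x
            (by rw [_root_.abs_of_nonpos (by linarith [hx.2] : x ≤ 0)]; linarith [hx.2])
            (by rw [_root_.abs_of_nonpos (by linarith [hx.2] : x ≤ 0)]; linarith [hx.1]))
        rw [intervalIntegral.integral_const, smul_eq_mul] at hmono
        nlinarith [hmono]
      have hmid : (∫ t in (-(1/2:ℝ))..(1/2:ℝ), g t) = T := hT.symm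
      linarith
  -- conclusion
  have h2C : 2 * Ctail ≤ (k:ℝ) * (b - 1/(k:ℝ)) * T := by
    have := (div_le_iff₀ (by positivity : (0:ℝ) < (k:ℝ) * (b - 1/(k:ℝ)))).mp hTR
    linarith
  calc ((k:ℝ))⁻¹ * ∫ t in (-((k:ℝ)*a))..((k:ℝ)*a), g t
      ≤ ((k:ℝ))⁻¹ * (T + 2 * Ctail) := by
        apply mul_le_mul_of_nonneg_left htail (by positivity)
    _ ≤ b * T := by
        have hinv : ((k:ℝ))⁻¹ * (k:ℝ) = 1 := inv_mul_cancel₀ hKne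
        have hexp : ((k:ℝ))⁻¹ * ((k:ℝ) * (b - 1/(k:ℝ)) * T) = (b - 1/(k:ℝ)) * T := by
          field_simp
        have h3 : ((k:ℝ))⁻¹ * (T + 2*Ctail) ≤ ((k:ℝ))⁻¹ * (T + (k:ℝ)*(b - 1/(k:ℝ))*T) := by
          apply mul_le_mul_of_nonneg_left (by linarith) (by positivity)
        have h4 : ((k:ℝ))⁻¹ * (T + (k:ℝ)*(b - 1/(k:ℝ))*T) = b * T := by
          field_simp
          ring
        linarith
end

section
/- Let p be a positive even integer, let l ≥ 2 be an integer, and let δ > 0. There exists a 0-symmetric measurable set E ⊂ 𝕋 with |E| > 1 − δ which has 0 as a point of density 1, such that for every c > 1/l there exists an idempotent trigonometric polynomial f with ∫_E |f(x)|^p dx ≤ c · ∫_𝕋 |f(x)|^p dx. Hence the Wiener–Shapiro inequality fails when the symmetric interval (−a,a) is replaced by a measurable set having 0 as a density point. -/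
open MeasureTheory Finset Filter

noncomputable section

namespace WSaux

open Metric Complex Real

abbrev T1 := AddCircle (1:ℝ)

lemma norm_coe_le (y : ℝ) : ‖((y : T1))‖ ≤ |y| := by
  simpa using QuotientAddGroup.norm_mk_le_norm (S := AddSubgroup.zmultiples (1:ℝ)) (m := y)

lemma norm_coe_eq (y : ℝ) : ‖((y : T1))‖ = |y - round y| := by
  rw [AddCircle.norm_eq]; simp

lemma norm_div_ge {N : ℕ} (hN : 0 < N) (m : ℤ) (hm : ¬ ((N:ℤ) ∣ m)) :
    (1:ℝ)/N ≤ ‖(((m:ℝ)/N : ℝ) : T1)‖ := by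
  rw [norm_coe_eq]
  set r := round ((m:ℝ)/N) with hr
  have hNR : (0:ℝ) < N := by exact_mod_cast hN
  have h1 : (1:ℝ) ≤ |(m:ℝ) - r * N| := by
    have : m - r * N ≠ 0 := by
      intro h
      exact hm ⟨r, by linarith [sub_eq_zero.mp h]⟩
    have : 1 ≤ |m - r * N| := Int.one_le_abs this
    calc (1:ℝ) ≤ |(m - r * N : ℤ)| := by exact_mod_cast this
      _ = |(m:ℝ) - r * N| := by push_cast; ring_nf
  have : (m:ℝ)/N - r = ((m:ℝ) - r * N)/N := by field_simp
  rw [this, abs_div, abs_of_pos hNR, div_le_div_iff₀ hNR hNR]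
  nlinarith [abs_nonneg ((m:ℝ) - r*N)]

lemma norm_exp_sub_one_ge {t a : ℝ} (ha : 0 < a) (ha' : a ≤ 1/4)
    (ht : ∀ m : ℤ, a ≤ |t - m|) :
    4*a ≤ ‖Complex.exp (2*π*Complex.I*t) - 1‖ := by
  set u : ℝ := t - round t with hu
  have hu1 : |u| ≤ 1/2 := abs_sub_round t
  have hu2 : a ≤ |u| := ht (round t)
  have hexp : Complex.exp (2*π*Complex.I*t) = Complex.exp ((2*π*u : ℝ)*Complex.I) := by
    have : (t:ℂ) = (u:ℂ) + (round t : ℤ) := by push_cast [hu]; ring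
    rw [this]
    have : 2*(π:ℂ)*Complex.I*((u:ℂ) + (round t : ℤ))
        = (2*π*u : ℝ)*Complex.I + (round t : ℤ)*(2*π*Complex.I) := by push_cast; ring
    rw [this, Complex.exp_add, Complex.exp_int_mul_two_pi_mul_I, mul_one]
  rw [hexp]
  set z := Complex.exp ((2*π*u : ℝ)*Complex.I) with hz
  have hre : (z - 1).re = Real.cos (2*π*u) - 1 := by
    rw [Complex.sub_re, Complex.one_re, hz, Complex.exp_ofReal_mul_I_re]
  have him : (z - 1).im = Real.sin (2*π*u) := by
    rw [Complex.sub_im, Complex.one_im, hz, Complex.exp_ofReal_mul_I_im, sub_zero]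
  have hπ : 0 < π := Real.pi_pos
  rcases le_or_gt |u| (1/4) with h4 | h4
  · have h0 : 0 ≤ 2*π*|u| := by positivity
    have h1 : 2*π*|u| ≤ π/2 := by nlinarith
    have hs : 4*|u| ≤ Real.sin (2*π*|u|) := by
      have := Real.mul_le_sin h0 h1
      calc 4*|u| = 2/π * (2*π*|u|) := by field_simp; ring
        _ ≤ _ := this
    have habs : |Real.sin (2*π*u)| = |Real.sin (2*π*|u|)| := by
      rcases abs_cases u with ⟨h, _⟩ | ⟨h, _⟩
      · rw [h]
      · rw [h]; rw [show 2*π*(-u) = -(2*π*u) by ring, Real.sin_neg, abs_neg]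
    calc 4*a ≤ 4*|u| := by linarith
      _ ≤ Real.sin (2*π*|u|) := hs
      _ ≤ |Real.sin (2*π*|u|)| := le_abs_self _
      _ = |(z-1).im| := by rw [him, habs]
      _ ≤ ‖z-1‖ := Complex.abs_im_le_norm _
      _ = ‖z-1‖ := rfl
  · have hc : Real.cos (2*π*u) ≤ 0 := by
      have hcabs : Real.cos (2*π*u) = Real.cos (2*π*|u|) := by
        rcases abs_cases u with ⟨h, _⟩ | ⟨h, _⟩
        · rw [h]
        · rw [h, show 2*π*(-u) = -(2*π*u) by ring, Real.cos_neg]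
      rw [hcabs]
      apply Real.cos_nonpos_of_pi_div_two_le_of_le <;> nlinarith
    calc 4*a ≤ 1 := by linarith
      _ ≤ |Real.cos (2*π*u) - 1| := by
          rw [abs_sub_comm, _root_.abs_of_nonneg (by linarith)]; linarith
      _ = |(z-1).re| := by rw [hre]
      _ ≤ ‖z-1‖ := Complex.abs_re_le_norm _
      _ = ‖z-1‖ := rfl

lemma fourier_mul_eq_pow (N : ℕ) (j : ℕ) (y : ℝ) :
    fourier ((N:ℤ)*(j:ℤ)) ((y : ℝ) : T1) = Complex.exp (2*π*Complex.I*((N*y : ℝ) : ℂ))^j := by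
  rw [fourier_coe_apply, ← Complex.exp_nat_mul]
  congr 1
  push_cast
  ring

lemma dirichlet_tail {N : ℕ} (hN : 0 < N) {ε : ℝ} (hε : 0 < ε) (hε' : (N:ℝ)*ε ≤ 1/4)
    (n : ℕ) {x : T1} (hx : ∀ m : ℤ, ε ≤ dist x (((m:ℝ)/N : ℝ) : T1)) :
    ‖∑ j ∈ range n, fourier ((N:ℤ)*(j:ℤ)) x‖ ≤ 1/(2*(N:ℝ)*ε) := by
  have hNR : (0:ℝ) < N := by exact_mod_cast hN
  induction x using QuotientAddGroup.induction_on with | H y => ?_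
  set z := Complex.exp (2*π*Complex.I*((N*y : ℝ) : ℂ)) with hzdef
  have ht : ∀ m : ℤ, (N:ℝ)*ε ≤ |(N:ℝ)*y - m| := by
    intro m
    have h1 : ε ≤ |y - (m:ℝ)/N| := by
      refine le_trans (hx m) ?_
      rw [dist_eq_norm]
      rw [← AddCircle.coe_sub]
      exact norm_coe_le _
    have : (N:ℝ)*y - m = (N:ℝ)*(y - (m:ℝ)/N) := by field_simp
    rw [this, abs_mul, abs_of_pos hNR]
    exact mul_le_mul_of_nonneg_left h1 hNR.le
  have hz : 4*((N:ℝ)*ε) ≤ ‖z - 1‖ := norm_exp_sub_one_ge (by positivity) hε' ht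
  have hz1 : z ≠ 1 := by
    intro h
    rw [h, sub_self, norm_zero] at hz
    nlinarith
  have hznorm : ‖z‖ = 1 := by
    rw [hzdef, show 2*(π:ℂ)*Complex.I*((N*y : ℝ) : ℂ) = ((2*π*(N*y) : ℝ) : ℂ)*Complex.I by
      push_cast; ring]
    exact Complex.norm_exp_ofReal_mul_I _
  have hsum : ∑ j ∈ range n, fourier ((N:ℤ)*(j:ℤ)) ((y:ℝ) : T1) = (z^n - 1)/(z - 1) := by
    rw [← geom_sum_eq hz1]
    exact Finset.sum_congr rfl fun j _ => fourier_mul_eq_pow N j y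
  rw [hsum, norm_div]
  have h2 : ‖z^n - 1‖ ≤ 2 := by
    calc ‖z^n - 1‖ ≤ ‖z^n‖ + ‖(1:ℂ)‖ := norm_sub_le _ _
      _ = 2 := by rw [norm_pow, hznorm]; norm_num
  have h3 : (0:ℝ) < 4*((N:ℝ)*ε) := by positivity
  calc ‖z^n - 1‖/‖z - 1‖ ≤ 2/(4*((N:ℝ)*ε)) := div_le_div₀ (by norm_num) h2 h3 hz
    _ = 1/(2*(N:ℝ)*ε) := by field_simp; ring

lemma dirichlet_peak {N n : ℕ} (hN : 0 < N) (hn : 0 < n) {x : T1}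
    (hx : ‖x‖ ≤ 1/(8*(N:ℝ)*n)) :
    ((n:ℝ)/2) ≤ ‖∑ j ∈ range n, fourier ((N:ℤ)*(j:ℤ)) x‖ := by
  have hNR : (0:ℝ) < N := by exact_mod_cast hN
  have hnR : (0:ℝ) < n := by exact_mod_cast hn
  induction x using QuotientAddGroup.induction_on with | H y => ?_
  set u : ℝ := y - round y with hu
  have hcoe : ((u : ℝ) : T1) = ((y : ℝ) : T1) := by
    rw [hu, sub_eq_add_neg, AddCircle.coe_add]
    convert add_zero _
    rw [AddCircle.coe_neg, neg_eq_zero, AddCircle.coe_eq_zero_iff]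
    exact ⟨round y, by simp⟩
  have hunorm : |u| ≤ 1/(8*(N:ℝ)*n) := by
    rw [hu, ← norm_coe_eq]; exact hx
  rw [← hcoe]
  have hre : ∀ j ∈ range n, (1:ℝ)/2 ≤ (fourier ((N:ℤ)*(j:ℤ)) ((u:ℝ) : T1)).re := by
    intro j hj
    have hjn : (j:ℝ) ≤ n := by exact_mod_cast (Finset.mem_range.mp hj).le
    rw [fourier_coe_apply, show 2*(π:ℂ)*Complex.I*(((N:ℤ)*(j:ℤ) : ℤ):ℂ)*(u:ℂ)/((1:ℝ):ℂ)
        = ((2*π*((N:ℝ)*j*u) : ℝ) : ℂ)*Complex.I by push_cast; ring, Complex.exp_ofReal_mul_I_re]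
    set θ := 2*π*((N:ℝ)*j*u)
    have hθ : |θ| ≤ 1 := by
      have hπ4 : π ≤ 4 := Real.pi_le_four
      have hπ : 0 < π := Real.pi_pos
      have habs : |θ| = (2*π*((N:ℝ)*j)) * |u| := by
        rw [show θ = (2*π*((N:ℝ)*j)) * u by ring, abs_mul,
          _root_.abs_of_nonneg (by positivity)]
      have h2 : (2*π*((N:ℝ)*j)) * |u| ≤ (2*π*((N:ℝ)*n)) * (1/(8*(N:ℝ)*n)) := by
        apply mul_le_mul (by gcongr) hunorm (abs_nonneg u) (by positivity)
      have h3 : (2*π*((N:ℝ)*n)) * (1/(8*(N:ℝ)*n)) = π/4 := by field_simp; ring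
      rw [habs]; rw [h3] at h2; linarith
    have := Real.one_sub_sq_div_two_le_cos (x := θ)
    nlinarith [_root_.sq_abs θ, abs_nonneg θ]
  calc (n:ℝ)/2 = ∑ j ∈ range n, (1:ℝ)/2 := by
        rw [Finset.sum_const, Finset.card_range]; ring
    _ ≤ ∑ j ∈ range n, (fourier ((N:ℤ)*(j:ℤ)) ((u:ℝ) : T1)).re := Finset.sum_le_sum hre
    _ = (∑ j ∈ range n, fourier ((N:ℤ)*(j:ℤ)) ((u:ℝ) : T1)).re := (Complex.re_sum _ _).symm
    _ ≤ ‖∑ j ∈ range n, fourier ((N:ℤ)*(j:ℤ)) ((u:ℝ) : T1)‖ := Complex.re_le_norm _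

lemma dirichlet_periodic {N : ℕ} (hN : 0 < N) (n k : ℕ) (x : T1) :
    ∑ j ∈ range n, fourier ((N:ℤ)*(j:ℤ)) (x + (((k:ℝ)/N : ℝ) : T1))
      = ∑ j ∈ range n, fourier ((N:ℤ)*(j:ℤ)) x := by
  have hNR : ((N:ℂ)) ≠ 0 := by exact_mod_cast hN.ne'
  induction x using QuotientAddGroup.induction_on with | H y => ?_
  rw [show ((y:ℝ) : T1) + (((k:ℝ)/N : ℝ) : T1) = ((y + (k:ℝ)/N : ℝ) : T1) by norm_cast]
  refine Finset.sum_congr rfl fun j _ => ?_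
  rw [fourier_coe_apply, fourier_coe_apply]
  rw [show 2*(π:ℂ)*Complex.I*(((N:ℤ)*(j:ℤ) : ℤ):ℂ)*((y + (k:ℝ)/N : ℝ):ℂ)/((1:ℝ):ℂ)
      = 2*(π:ℂ)*Complex.I*(((N:ℤ)*(j:ℤ) : ℤ):ℂ)*((y:ℝ):ℂ)/((1:ℝ):ℂ)
        + ((j*k : ℤ):ℂ)*(2*(π:ℂ)*Complex.I) by push_cast; field_simp]
  rw [Complex.exp_add, Complex.exp_int_mul_two_pi_mul_I, mul_one]

lemma setIntegral_ball_add (c : T1) (r : ℝ) (F : T1 → ℝ)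
    (hF : ∀ x, F (x + c) = F x) :
    ∫ x in ball c r, F x = ∫ x in ball (0:T1) r, F x := by
  have h := (measurePreserving_add_right (volume : Measure T1) c).setIntegral_preimage_emb
    (MeasurableEquiv.addRight c).measurableEmbedding F (ball c r)
  have hpre : (fun x => x + c) ⁻¹' (ball c r) = ball (0:T1) r := by
    ext x
    simp [mem_ball, dist_eq_norm, add_sub_cancel_right]
  rw [hpre] at h
  rw [← h]
  exact setIntegral_congr_fun measurableSet_ball fun x _ => hF x

lemma volume_ball_toReal {h : ℝ} (h0 : 0 < h) (h2 : h ≤ 1/2) :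
    (volume (ball (0:T1) h)).toReal = 2*h := by
  rw [← measure_congr AddCircle.closedBall_ae_eq_ball, AddCircle.volume_closedBall,
    min_eq_right (by linarith), ENNReal.toReal_ofReal (by linarith)]

end WSaux

end

open WSaux Metric in
set_option maxHeartbeats 2000000 in
/-- **Failure of the Wiener–Shapiro inequality on measurable sets with `0` a density
point.** For `p` a positive even integer, `l ≥ 2` and `δ > 0`, there is a
`0`-symmetric measurable set `E ⊆ 𝕋` with `|E| > 1 - δ` having `0` as a point of
density `1`, such that for every `c > 1/l` some nonzero idempotent `f = ∑_{h∈H} e_h`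
satisfies `∫_E |f|^p ≤ c ∫_𝕋 |f|^p`. -/
theorem wiener_shapiro_fails_on_density_sets
    (p : ℕ) (hp_even : Even p) (hp_pos : 0 < p)
    (l : ℕ) (hl : 2 ≤ l) (δ : ℝ) (hδ : 0 < δ) :
    ∃ E : Set (AddCircle (1 : ℝ)), MeasurableSet E ∧ (-E) = E ∧
      1 - δ < (volume E).toReal ∧
      Tendsto (fun h : ℝ =>
          (volume (E ∩ Metric.ball (0 : AddCircle (1 : ℝ)) h)).toReal / (2 * h))
        (nhdsWithin 0 (Set.Ioi 0)) (nhds 1) ∧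
      ∀ c : ℝ, 1 / l < c → ∃ H : Finset ℤ, H.Nonempty ∧
        (∫ x in E, ‖∑ h ∈ H, fourier h x‖ ^ p ∂volume) ≤
          c * ∫ x : AddCircle (1 : ℝ), ‖∑ h ∈ H, fourier h x‖ ^ p := by
  have hp2 : 2 ≤ p := by rcases hp_even with ⟨k, rfl⟩; omega
  set N : ℕ := 2*l with hNdef
  have hN0 : 0 < N := by omega
  have hNR : (0:ℝ) < N := by exact_mod_cast hN0
  have hN4 : (4:ℝ) ≤ N := by exact_mod_cast (by omega : 4 ≤ N)
  set ε : ℝ := min (δ/(2*N)) (1/(4*N)) with hεdef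
  have hε0 : 0 < ε := lt_min (by positivity) (by positivity)
  have hε1 : ε ≤ 1/(4*N) := min_le_right _ _
  have hε2 : ε ≤ δ/(2*N) := min_le_left _ _
  have hNε : (N:ℝ)*ε ≤ 1/4 := by
    calc (N:ℝ)*ε ≤ (N:ℝ)*(1/(4*N)) := by gcongr
      _ = 1/4 := by field_simp
  set cpt : ℕ → T1 := fun k => (((k:ℝ)/N : ℝ) : T1) with hcpt
  set U : Set T1 := ⋃ k ∈ Finset.Icc 1 (N-1), ball (cpt k) ε with hUdef
  have hUopen : IsOpen U := isOpen_biUnion fun _ _ => isOpen_ball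
  refine ⟨Uᶜ, hUopen.measurableSet.compl, ?_, ?_, ?_, ?_⟩
  · -- symmetry
    have hneg : ∀ k, 1 ≤ k → k ≤ N-1 → -(cpt k) = cpt (N - k) := by
      intro k hk1 hk2
      have hkN : k ≤ N := by omega
      have hsub : ((N - k : ℕ) : ℝ) = (N:ℝ) - k := by
        push_cast [Nat.cast_sub hkN]; ring
      rw [hcpt]
      simp only
      rw [eq_comm, eq_neg_iff_add_eq_zero, ← AddCircle.coe_add, hsub]
      have : ((N:ℝ) - k)/N + (k:ℝ)/N = 1 := by field_simp; ring
      rw [this]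
      exact AddCircle.coe_period (p := (1:ℝ))
    have hUsym : ∀ x : T1, -x ∈ U ↔ x ∈ U := by
      have key : ∀ x : T1, x ∈ U → -x ∈ U := by
        intro x hx
        rw [hUdef, Set.mem_iUnion₂] at hx ⊢
        obtain ⟨k, hk, hxk⟩ := hx
        rw [Finset.mem_Icc] at hk
        refine ⟨N - k, Finset.mem_Icc.mpr (by omega), ?_⟩
        rw [mem_ball] at hxk ⊢
        rw [← hneg k hk.1 hk.2, dist_neg_neg]
        exact hxk
      intro x
      exact ⟨fun h => by simpa using key _ h, key x⟩
    ext x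
    simp only [Set.mem_neg, Set.mem_compl_iff]
    rw [not_iff_not]
    exact hUsym x
  · -- measure
    have hU1 : volume U ≤ ENNReal.ofReal (((N-1:ℕ):ℝ)*(2*ε)) := by
      calc volume U ≤ ∑ k ∈ Finset.Icc 1 (N-1), volume (ball (cpt k) ε) :=
            measure_biUnion_finset_le _ _
        _ ≤ ∑ _k ∈ Finset.Icc 1 (N-1), ENNReal.ofReal (2*ε) := by
            refine Finset.sum_le_sum fun k _ => ?_
            calc volume (ball (cpt k) ε) ≤ volume (closedBall (cpt k) ε) :=
                  measure_mono ball_subset_closedBall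
              _ = ENNReal.ofReal (min 1 (2*ε)) := AddCircle.volume_closedBall 1 ε
              _ ≤ ENNReal.ofReal (2*ε) := ENNReal.ofReal_le_ofReal (min_le_right _ _)
        _ = (N-1 : ℕ) • ENNReal.ofReal (2*ε) := by
            rw [Finset.sum_const, Nat.card_Icc]
            norm_num
        _ = ENNReal.ofReal (((N-1:ℕ):ℝ)*(2*ε)) := by
            rw [← ENNReal.ofReal_nsmul, nsmul_eq_mul]
    have hUle : volume U ≤ 1 := by
      calc volume U ≤ volume (Set.univ : Set T1) := measure_mono (Set.subset_univ _)
        _ = 1 := by rw [AddCircle.measure_univ, ENNReal.ofReal_one]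
    have hEvol : (volume Uᶜ).toReal = 1 - (volume U).toReal := by
      rw [measure_compl hUopen.measurableSet (measure_ne_top _ _), AddCircle.measure_univ,
        ENNReal.ofReal_one, ENNReal.toReal_sub_of_le hUle ENNReal.one_ne_top, ENNReal.toReal_one]
    rw [hEvol]
    have hUto : (volume U).toReal ≤ ((N-1:ℕ):ℝ)*(2*ε) := by
      have := ENNReal.toReal_mono ENNReal.ofReal_ne_top hU1
      rwa [ENNReal.toReal_ofReal (by positivity)] at this
    have hcast : ((N-1:ℕ):ℝ) = (N:ℝ) - 1 := by
      push_cast [Nat.cast_sub hN0]; ring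
    have hlt : ((N-1:ℕ):ℝ)*(2*ε) < δ := by
      rw [hcast]
      have h1 : 2*ε ≤ δ/(N:ℝ) := by
        rw [le_div_iff₀ hNR]
        rw [le_div_iff₀ (by positivity : (0:ℝ) < 2*(N:ℝ))] at hε2
        nlinarith
      have h2 : ((N:ℝ)-1)*(2*ε) ≤ ((N:ℝ)-1)*(δ/N) := by
        apply mul_le_mul_of_nonneg_left h1 (by linarith)
      have h3 : ((N:ℝ)-1)*(δ/N) < δ := by
        rw [mul_div_assoc']
        rw [div_lt_iff₀ hNR]
        nlinarith
      linarith
    linarith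
  · -- density
    have hEball : ∀ h : ℝ, 0 < h → h ≤ 1/(2*(N:ℝ)) → Uᶜ ∩ ball (0:T1) h = ball (0:T1) h := by
      intro h h0 h2
      refine Set.inter_eq_right.mpr fun x hx hxU => ?_
      rw [hUdef, Set.mem_iUnion₂] at hxU
      obtain ⟨k, hk, hxk⟩ := hxU
      rw [Finset.mem_Icc] at hk
      have hdist : (1:ℝ)/N ≤ dist (cpt k) 0 := by
        rw [dist_zero_right]
        have hnd : ¬ ((N:ℤ) ∣ (k:ℤ)) := by
          intro hdvd
          have hk0 : (0:ℤ) < (k:ℤ) := by exact_mod_cast (by omega : 0 < k)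
          have := Int.le_of_dvd hk0 hdvd
          have : N ≤ k := by exact_mod_cast this
          omega
        have := norm_div_ge hN0 (k:ℤ) hnd
        simpa using this
      rw [mem_ball] at hx hxk
      have htri := dist_triangle (cpt k) x 0
      rw [dist_comm (cpt k) x] at htri
      have hlast : 1/(4*(N:ℝ)) + 1/(2*(N:ℝ)) < 1/(N:ℝ) := by
        rw [div_add_div _ _ (by positivity) (by positivity), div_lt_div_iff₀ (by positivity) hNR]
        nlinarith
      linarith
    have hev : ∀ᶠ h in nhdsWithin (0:ℝ) (Set.Ioi 0),
        (volume (Uᶜ ∩ ball (0:T1) h)).toReal / (2*h) = 1 := by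
      filter_upwards [Ioo_mem_nhdsGT_of_mem
        (Set.mem_Ico.mpr ⟨le_refl (0:ℝ), (by positivity : (0:ℝ) < 1/(2*(N:ℝ)))⟩)] with h hh
      obtain ⟨h0, h1⟩ : 0 < h ∧ h < 1/(2*(N:ℝ)) := ⟨hh.1, hh.2⟩
      have hhalf : 1/(2*(N:ℝ)) ≤ 1/2 :=
        one_div_le_one_div_of_le (by norm_num) (by nlinarith)
      rw [hEball h h0 h1.le, volume_ball_toReal h0 (by linarith), div_self (by positivity)]
    exact Tendsto.congr' (hev.mono fun h e => e.symm) tendsto_const_nhds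
  · -- main estimate
    intro c hc
    set B : ℝ := (1/(2*(N:ℝ)*ε))^p with hBdef
    have hB0 : 0 ≤ B := by positivity
    set n : ℕ := max 2 (Nat.ceil (16*(N:ℝ)^2*B)) with hndef
    have hn2 : 2 ≤ n := le_max_left _ _
    have hn0 : 0 < n := by omega
    have hnR : (0:ℝ) < n := by exact_mod_cast hn0
    have hn1R : (1:ℝ) ≤ (n:ℝ)/2 := by
      have : (2:ℝ) ≤ n := by exact_mod_cast hn2
      linarith
    have hnB : 16*(N:ℝ)^2*B ≤ n := by
      calc 16*(N:ℝ)^2*B ≤ (Nat.ceil (16*(N:ℝ)^2*B) : ℝ) := Nat.le_ceil _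
        _ ≤ (n:ℝ) := by
            have h : Nat.ceil (16*(N:ℝ)^2*B) ≤ n := by
              rw [hndef]
              exact le_max_right _ _
            exact_mod_cast h
    refine ⟨(range n).image (fun j : ℕ => (N:ℤ)*(j:ℤ)), ?_, ?_⟩
    · exact (Finset.nonempty_range_iff.mpr (by omega)).image _
    have hHsum : ∀ x : T1, ∑ h ∈ (range n).image (fun j : ℕ => (N:ℤ)*(j:ℤ)), fourier h x
        = ∑ j ∈ range n, fourier ((N:ℤ)*(j:ℤ)) x := by
      intro x
      refine Finset.sum_image ?_
      intro a _ b _ hab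
      have hNz : (N:ℤ) ≠ 0 := by exact_mod_cast hN0.ne'
      exact_mod_cast mul_left_cancel₀ hNz hab
    simp only [hHsum]
    set f : T1 → ℂ := fun x => ∑ j ∈ range n, fourier ((N:ℤ)*(j:ℤ)) x with hfdef
    set F : T1 → ℝ := fun x => ‖f x‖^p with hFdef
    have hFcont : Continuous F :=
      (continuous_finset_sum _ fun j _ => (fourier _).continuous).norm.pow p
    have hFint : Integrable F volume := by
      rw [← integrableOn_univ]
      exact hFcont.continuousOn.integrableOn_compact isCompact_univ
    have hF0 : ∀ x, 0 ≤ F x := fun x => pow_nonneg (norm_nonneg _) p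
    set I : ℝ := ∫ x, F x with hIdef
    have hI0 : 0 ≤ I := integral_nonneg hF0
    -- peak lower bound
    have hr1pos : (0:ℝ) < 1/(8*(N:ℝ)*n) := by positivity
    have hIlow : (n:ℝ)/(16*(N:ℝ)) ≤ I := by
      have hpt : ∀ x ∈ ball (0:T1) (1/(8*(N:ℝ)*n)), ((n:ℝ)/2)^p ≤ F x := by
        intro x hx
        apply pow_le_pow_left₀ (by positivity)
        apply dirichlet_peak hN0 hn0
        rw [mem_ball, dist_zero_right] at hx
        exact hx.le
      have h1 : ((n:ℝ)/2)^p * (volume (ball (0:T1) (1/(8*(N:ℝ)*n)))).toReal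
          ≤ ∫ x in ball (0:T1) (1/(8*(N:ℝ)*n)), F x := by
        have := setIntegral_mono_on (integrableOn_const measure_ball_lt_top.ne)
          hFint.integrableOn measurableSet_ball hpt
        rwa [setIntegral_const, smul_eq_mul, mul_comm] at this
      have h2 : ∫ x in ball (0:T1) (1/(8*(N:ℝ)*n)), F x ≤ I :=
        setIntegral_le_integral hFint (Filter.Eventually.of_forall hF0)
      have h3 : (volume (ball (0:T1) (1/(8*(N:ℝ)*n)))).toReal = 2*(1/(8*(N:ℝ)*n)) := by
        apply volume_ball_toReal hr1pos
        have h8 : (2:ℝ) ≤ 8*(N:ℝ)*n := by nlinarith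
        exact one_div_le_one_div_of_le (by norm_num) h8
      have h4 : ((n:ℝ)/2)^2 ≤ ((n:ℝ)/2)^p := pow_le_pow_right₀ hn1R hp2
      have h5 : ((n:ℝ)/2)^2 * (2*(1/(8*(N:ℝ)*n))) = (n:ℝ)/(16*(N:ℝ)) := by
        field_simp
        ring
      calc (n:ℝ)/(16*(N:ℝ)) = ((n:ℝ)/2)^2 * (2*(1/(8*(N:ℝ)*n))) := h5.symm
        _ ≤ ((n:ℝ)/2)^p * (2*(1/(8*(N:ℝ)*n))) := by
            apply mul_le_mul_of_nonneg_right h4 (by positivity)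
        _ = ((n:ℝ)/2)^p * (volume (ball (0:T1) (1/(8*(N:ℝ)*n)))).toReal := by rw [h3]
        _ ≤ ∫ x in ball (0:T1) (1/(8*(N:ℝ)*n)), F x := h1
        _ ≤ I := h2
    -- cell bound
    set r2 : ℝ := 1/(2*(N:ℝ)) with hr2def
    have hεr2 : ε ≤ r2 := by
      refine le_trans hε1 ?_
      rw [hr2def]
      apply one_div_le_one_div_of_le (by positivity)
      nlinarith
    have hper : ∀ k : ℕ, ∀ x : T1, F (x + cpt k) = F x := by
      intro k x
      show ‖f (x + cpt k)‖^p = ‖f x‖^p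
      rw [hfdef]
      simp only
      rw [dirichlet_periodic hN0 n k x]
    have htrans : ∀ k : ℕ, ∫ x in ball (cpt k) r2, F x = ∫ x in ball (0:T1) r2, F x :=
      fun k => setIntegral_ball_add (cpt k) r2 F (hper k)
    have hcell : ∫ x in ball (0:T1) r2, F x ≤ I/(N:ℝ) := by
      have hdisj : (↑(range N) : Set ℕ).Pairwise (Function.onFun Disjoint fun k => ball (cpt k) r2) := by
        intro j hj k hk hjk
        simp only [Finset.coe_range, Set.mem_Iio] at hj hk
        simp only [Function.onFun]
        apply ball_disjoint_ball
        have hd1 : dist (cpt j) (cpt k) = ‖((((j:ℝ)-(k:ℝ))/N : ℝ):T1)‖ := by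
          rw [hcpt]
          simp only
          rw [dist_eq_norm, ← AddCircle.coe_sub]
          congr 1
          ring
        have hdvd : ¬ ((N:ℤ) ∣ ((j:ℤ) - (k:ℤ))) := by
          intro hdvd
          have h1 : (0:ℤ) < |(j:ℤ) - (k:ℤ)| := by
            rw [abs_pos, sub_ne_zero]
            exact_mod_cast hjk
          have h2 : (N:ℤ) ≤ |(j:ℤ) - (k:ℤ)| := Int.le_of_dvd h1 ((dvd_abs _ _).mpr hdvd)
          have h3 : |(j:ℤ) - (k:ℤ)| < (N:ℤ) := by
            rw [abs_sub_lt_iff]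
            omega
          omega
        have := norm_div_ge hN0 ((j:ℤ) - (k:ℤ)) hdvd
        have hcast : (((j:ℤ) - (k:ℤ) : ℤ):ℝ) = (j:ℝ) - (k:ℝ) := by push_cast; ring
        rw [hcast] at this
        rw [hd1, hr2def]
        calc 1/(2*(N:ℝ)) + 1/(2*(N:ℝ)) = 1/(N:ℝ) := by
              rw [← add_div, div_eq_div_iff (by positivity : (0:ℝ) < 2*(N:ℝ)).ne' hNR.ne']
              ring
          _ ≤ _ := this
      have he : ∫ x in ⋃ k ∈ range N, ball (cpt k) r2, F x
          = ∑ k ∈ range N, ∫ x in ball (cpt k) r2, F x :=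
        integral_biUnion_finset (range N) (fun k _ => measurableSet_ball) hdisj
          (fun k _ => hFint.integrableOn)
      have hsumeq : ∑ k ∈ range N, ∫ x in ball (cpt k) r2, F x
          = (N:ℝ) * ∫ x in ball (0:T1) r2, F x := by
        rw [Finset.sum_congr rfl fun k _ => htrans k, Finset.sum_const, Finset.card_range,
          nsmul_eq_mul]
      have hle : (N:ℝ) * ∫ x in ball (0:T1) r2, F x ≤ I := by
        rw [← hsumeq, ← he]
        exact setIntegral_le_integral hFint (Filter.Eventually.of_forall hF0)
      rw [le_div_iff₀ hNR]
      linarith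
    -- tail bound
    have htailpt : ∀ x ∈ Uᶜ \ ball (0:T1) r2, F x ≤ B := by
      intro x hx
      obtain ⟨hxE, hxb⟩ := hx
      have hxd : ∀ m : ℤ, ε ≤ dist x ((((m:ℝ))/(N:ℝ) : ℝ) : T1) := by
        intro m
        have hNz : ((N:ℤ)) ≠ 0 := by exact_mod_cast hN0.ne'
        have hmod0 : (0:ℤ) ≤ m % (N:ℤ) := Int.emod_nonneg m hNz
        have hmodlt : m % (N:ℤ) < (N:ℤ) := Int.emod_lt_of_pos m (by exact_mod_cast hN0)
        set k : ℕ := (m % (N:ℤ)).toNat with hkdef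
        have hkN : k < N := by omega
        have hkr : ((k:ℝ)) = ((m % (N:ℤ) : ℤ):ℝ) := by
          rw [hkdef]
          exact_mod_cast congrArg (Int.cast : ℤ → ℝ) (Int.toNat_of_nonneg hmod0)
        have hzint : (k:ℤ) - m = (-(m / (N:ℤ))) * (N:ℤ) := by
          have hm := Int.mul_ediv_add_emod m (N:ℤ)
          have hk2 : (k:ℤ) = m % (N:ℤ) := by
            rw [hkdef]
            exact Int.toNat_of_nonneg hmod0
          rw [hk2]
          linarith [hm]
        have hzreal : ((k:ℝ)) - (m:ℝ) = ((-(m / (N:ℤ)) : ℤ):ℝ) * (N:ℝ) := by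
          exact_mod_cast hzint
        have hcoe : ((((m:ℝ))/(N:ℝ) : ℝ) : T1) = cpt k := by
          rw [hcpt]
          simp only
          rw [eq_comm, ← sub_eq_zero, ← AddCircle.coe_sub, div_sub_div_same, hzreal,
            mul_div_cancel_right₀ _ hNR.ne', AddCircle.coe_eq_zero_iff]
          exact ⟨-(m / (N:ℤ)), by simp⟩
        rw [hcoe]
        rcases Nat.eq_zero_or_pos k with hk0 | hk1
        · have : cpt k = 0 := by
            rw [hcpt, hk0]
            norm_num
          rw [this]
          simp only [mem_ball, not_lt] at hxb
          exact le_trans hεr2 hxb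
        · have hxU : x ∉ ball (cpt k) ε := by
            intro hmem
            apply hxE
            rw [hUdef, Set.mem_iUnion₂]
            exact ⟨k, Finset.mem_Icc.mpr (by omega), hmem⟩
          rw [mem_ball, not_lt] at hxU
          exact hxU
      have hnorm := dirichlet_tail hN0 hε0 hNε n hxd
      exact pow_le_pow_left₀ (norm_nonneg _) hnorm p
    have hmeasd : MeasurableSet (Uᶜ \ ball (0:T1) r2) :=
      hUopen.measurableSet.compl.diff measurableSet_ball
    have htail : ∫ x in Uᶜ \ ball (0:T1) r2, F x ≤ B := by
      calc ∫ x in Uᶜ \ ball (0:T1) r2, F x ≤ ∫ _x in Uᶜ \ ball (0:T1) r2, B :=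
            setIntegral_mono_on hFint.integrableOn
              (integrableOn_const (measure_lt_top _ _).ne) hmeasd htailpt
        _ = (volume (Uᶜ \ ball (0:T1) r2)).toReal * B := by
            rw [setIntegral_const, smul_eq_mul]; rfl
        _ ≤ 1 * B := by
            apply mul_le_mul_of_nonneg_right ?_ hB0
            have h1 : volume (Uᶜ \ ball (0:T1) r2) ≤ 1 := by
              calc volume (Uᶜ \ ball (0:T1) r2) ≤ volume (Set.univ : Set T1) :=
                    measure_mono (Set.subset_univ _)
                _ = 1 := by rw [AddCircle.measure_univ, ENNReal.ofReal_one]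
            calc (volume (Uᶜ \ ball (0:T1) r2)).toReal ≤ (1:ENNReal).toReal :=
                  ENNReal.toReal_mono ENNReal.one_ne_top h1
              _ = 1 := rfl
        _ = B := one_mul B
    -- decomposition
    have hdec : ∫ x in Uᶜ, F x ≤ (∫ x in ball (0:T1) r2, F x)
        + ∫ x in Uᶜ \ ball (0:T1) r2, F x := by
      have hsub : Uᶜ ⊆ ball (0:T1) r2 ∪ (Uᶜ \ ball (0:T1) r2) := by
        intro x hx
        by_cases hb : x ∈ ball (0:T1) r2
        · exact Or.inl hb
        · exact Or.inr ⟨hx, hb⟩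
      calc ∫ x in Uᶜ, F x ≤ ∫ x in ball (0:T1) r2 ∪ (Uᶜ \ ball (0:T1) r2), F x :=
            setIntegral_mono_set hFint.integrableOn (Filter.Eventually.of_forall hF0)
              (HasSubset.Subset.eventuallyLE hsub)
        _ = _ := setIntegral_union Set.disjoint_sdiff_right hmeasd hFint.integrableOn
              hFint.integrableOn
    -- conclusion
    show (∫ x in Uᶜ, F x ∂volume) ≤ c * I
    have hBI : B ≤ I/(N:ℝ) := by
      rw [le_div_iff₀ hNR]
      calc B*(N:ℝ) = (16*(N:ℝ)^2*B)/(16*(N:ℝ)) := by field_simp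
        _ ≤ (n:ℝ)/(16*(N:ℝ)) := by gcongr
        _ ≤ I := hIlow
    have hNl : (N:ℝ) = 2*(l:ℝ) := by rw [hNdef]; push_cast; ring
    have hl0 : (0:ℝ) < l := by exact_mod_cast (by omega : 0 < l)
    calc ∫ x in Uᶜ, F x ≤ I/(N:ℝ) + B := by linarith
      _ ≤ I/(N:ℝ) + I/(N:ℝ) := by linarith
      _ = (1/(l:ℝ)) * I := by rw [hNl]; field_simp; ring
      _ ≤ c * I := mul_le_mul_of_nonneg_right hc.le hI0
end

section
/- Let 0 < q ≤ p < 2 and let ε > 0. Then there exist n ≥ 1 and signs η_0, …, η_{n-1} ∈ {−1, +1} such that ‖D_n‖_{L^p(𝕋)} ≤ ε · ‖∑_{k=0}^{n-1} η_k e_k‖_{L^q(𝕋)}, where D_n is the Dirichlet kernel. -/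
open MeasureTheory Finset intervalIntegral Filter

noncomputable def ee (k : ℕ) (x : ℝ) : ℂ := Complex.exp (2 * Real.pi * Complex.I * (k : ℂ) * (x : ℂ))

lemma ee_cont (k : ℕ) : Continuous (ee k) := by
  unfold ee; fun_prop

lemma ee_norm (k : ℕ) (x : ℝ) : ‖ee k x‖ = 1 := by
  unfold ee
  rw [Complex.norm_exp]
  have : (2 * ↑Real.pi * Complex.I * (k:ℂ) * (x:ℂ)).re = 0 := by simp
  rw [this, Real.exp_zero]

lemma ee_mul_conj (j k : ℕ) (x : ℝ) :
    ee j x * (starRingEnd ℂ) (ee k x) =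
      Complex.exp ((2 * Real.pi * Complex.I * ((j:ℤ) - (k:ℤ))) * (x : ℂ)) := by
  unfold ee
  rw [← Complex.exp_conj, ← Complex.exp_add]
  congr 1
  simp only [map_mul, Complex.conj_I, Complex.conj_ofReal, map_ofNat, map_natCast]
  push_cast
  ring

lemma ortho (j k : ℕ) :
    (∫ x in (0:ℝ)..1, ee j x * (starRingEnd ℂ) (ee k x)) = if j = k then 1 else 0 := by
  have := ee_mul_conj j k
  by_cases h : j = k
  · subst h
    simp only [ee_mul_conj]
    simp
  · simp only [ee_mul_conj]
    have hc : (2 * (Real.pi:ℂ) * Complex.I * ((j:ℤ) - (k:ℤ))) ≠ 0 := by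
      have : ((j:ℤ) - (k:ℤ) : ℂ) ≠ 0 := by
        intro hh
        apply h
        have : ((j:ℤ):ℂ) = ((k:ℤ):ℂ) := by linear_combination hh
        exact_mod_cast this
      push_cast at this ⊢
      simp [Real.pi_ne_zero, Complex.I_ne_zero, this, Complex.ofReal_ne_zero, sub_eq_zero]
    rw [integral_exp_mul_complex hc]
    rw [if_neg h]
    have : Complex.exp (2 * (Real.pi:ℂ) * Complex.I * ((j:ℤ) - (k:ℤ)) * (1:ℝ)) = 1 := by
      push_cast
      rw [mul_one]
      have := Complex.exp_int_mul_two_pi_mul_I ((j:ℤ) - (k:ℤ))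
      rw [← this]
      congr 1
      push_cast
      ring
    rw [this]
    simp


lemma parseval (c : ℕ → ℝ) (n : ℕ) :
    ∫ x in (0:ℝ)..1, ‖∑ k ∈ range n, (c k : ℂ) * ee k x‖^2 = ∑ k ∈ range n, (c k)^2 := by
  set S : ℝ → ℂ := fun x => ∑ k ∈ range n, (c k : ℂ) * ee k x with hS
  have hScont : Continuous S := by
    apply continuous_finset_sum
    exact fun k _ => continuous_const.mul (ee_cont k)
  have expand : ∀ x : ℝ, S x * (starRingEnd ℂ) (S x) =
      ∑ j ∈ range n, ∑ k ∈ range n, ((c j : ℂ) * (c k : ℂ)) * (ee j x * (starRingEnd ℂ) (ee k x)) := by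
    intro x
    rw [hS]
    simp only [map_sum, map_mul, Complex.conj_ofReal]
    rw [Finset.sum_mul_sum]
    apply Finset.sum_congr rfl; intro j _
    apply Finset.sum_congr rfl; intro k _
    ring
  have key : (∫ x in (0:ℝ)..1, S x * (starRingEnd ℂ) (S x)) = ∑ k ∈ range n, ((c k : ℂ))^2 := by
    simp only [expand]
    rw [intervalIntegral.integral_finset_sum]
    · have : ∀ j ∈ range n, (∫ x in (0:ℝ)..1, ∑ k ∈ range n, ((c j : ℂ) * (c k : ℂ)) * (ee j x * (starRingEnd ℂ) (ee k x)))
          = (c j : ℂ)^2 := by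
        intro j hj
        rw [intervalIntegral.integral_finset_sum]
        · have : ∀ k ∈ range n, (∫ x in (0:ℝ)..1, ((c j : ℂ) * (c k : ℂ)) * (ee j x * (starRingEnd ℂ) (ee k x)))
              = if j = k then (c j : ℂ)^2 else 0 := by
            intro k _
            rw [intervalIntegral.integral_const_mul, ortho]
            by_cases h : j = k
            · subst h; simp [sq]
            · simp [h]
          rw [Finset.sum_congr rfl this, Finset.sum_ite_eq (range n) j _, if_pos hj]
        · intro k _
          apply Continuous.intervalIntegrable
          exact continuous_const.mul ((ee_cont j).mul (Complex.continuous_conj.comp (ee_cont k)))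
      rw [Finset.sum_congr rfl this]
    · intro j _
      apply Continuous.intervalIntegrable
      apply continuous_finset_sum
      exact fun k _ => continuous_const.mul ((ee_cont j).mul (Complex.continuous_conj.comp (ee_cont k)))
  have hre : ∀ x : ℝ, ‖S x‖^2 = (S x * (starRingEnd ℂ) (S x)).re := by
    intro x
    rw [Complex.mul_conj, Complex.ofReal_re, Complex.sq_norm]
  calc ∫ x in (0:ℝ)..1, ‖S x‖^2 = ∫ x in (0:ℝ)..1, (S x * (starRingEnd ℂ) (S x)).re := by
        simp only [hre]
    _ = (∫ x in (0:ℝ)..1, S x * (starRingEnd ℂ) (S x)).re := by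
        have hint : IntervalIntegrable (fun x => S x * (starRingEnd ℂ) (S x)) volume 0 1 :=
          (hScont.mul (Complex.continuous_conj.comp hScont)).intervalIntegrable _ _
        exact Complex.reCLM.intervalIntegral_comp_comm hint
    _ = ∑ k ∈ range n, (c k)^2 := by
        rw [key]
        simp [← Complex.ofReal_pow]

lemma ee_add (j k : ℕ) (x : ℝ) : ee (j + k) x = ee j x * ee k x := by
  unfold ee; rw [← Complex.exp_add]; congr 1; push_cast; ring

lemma ee_zero (x : ℝ) : ee 0 x = 1 := by unfold ee; simp

noncomputable def rs : ℕ → (ℕ → ℝ) × (ℕ → ℝ)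
  | 0 => (fun _ => 1, fun _ => 1)
  | m+1 =>
    (fun k => if k < 2^m then (rs m).1 k else (rs m).2 (k - 2^m),
     fun k => if k < 2^m then (rs m).1 k else -((rs m).2 (k - 2^m)))

lemma rs_sign (m : ℕ) : ∀ k, ((rs m).1 k = 1 ∨ (rs m).1 k = -1) ∧ ((rs m).2 k = 1 ∨ (rs m).2 k = -1) := by
  induction m with
  | zero => intro k; constructor <;> simp [rs]
  | succ m ih =>
    intro k
    rcases ih k with ⟨h1, h2⟩; rcases ih (k - 2^m) with ⟨h3, h4⟩
    by_cases h : k < 2^m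
    · simp only [rs, if_pos h]; exact ⟨h1, h1⟩
    · simp only [rs, if_neg h]
      refine ⟨h4, ?_⟩
      rcases h4 with h4 | h4 <;> simp [h4]

noncomputable def P (m : ℕ) (x : ℝ) : ℂ := ∑ k ∈ range (2^m), ((rs m).1 k : ℂ) * ee k x
noncomputable def Q (m : ℕ) (x : ℝ) : ℂ := ∑ k ∈ range (2^m), ((rs m).2 k : ℂ) * ee k x

lemma pow_succ_two (m : ℕ) : 2^(m+1) = 2^m + 2^m := by ring

lemma P_succ (m : ℕ) (x : ℝ) : P (m+1) x = P m x + ee (2^m) x * Q m x := by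
  unfold P Q
  rw [pow_succ_two, Finset.sum_range_add]
  congr 1
  · apply Finset.sum_congr rfl
    intro k hk
    rw [Finset.mem_range] at hk
    simp [rs, hk]
  · rw [Finset.mul_sum]
    apply Finset.sum_congr rfl
    intro k hk
    have h1 : ¬ (2^m + k < 2^m) := by omega
    simp only [rs, h1, if_neg, not_false_iff, Nat.add_sub_cancel_left, ee_add]
    ring

lemma Q_succ (m : ℕ) (x : ℝ) : Q (m+1) x = P m x - ee (2^m) x * Q m x := by
  unfold P Q
  rw [pow_succ_two, Finset.sum_range_add, sub_eq_add_neg]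
  congr 1
  · apply Finset.sum_congr rfl
    intro k hk
    rw [Finset.mem_range] at hk
    simp [rs, hk]
  · rw [Finset.mul_sum, ← Finset.sum_neg_distrib]
    apply Finset.sum_congr rfl
    intro k hk
    have h1 : ¬ (2^m + k < 2^m) := by omega
    simp only [rs, h1, if_neg, not_false_iff, Nat.add_sub_cancel_left, ee_add]
    push_cast
    ring

lemma para (u v : ℂ) : ‖u+v‖^2 + ‖u-v‖^2 = 2*‖u‖^2 + 2*‖v‖^2 := by
  simp only [Complex.sq_norm, Complex.normSq_apply, Complex.add_re,
    Complex.add_im, Complex.sub_re, Complex.sub_im]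
  ring

lemma rs_norm (m : ℕ) (x : ℝ) : ‖P m x‖^2 + ‖Q m x‖^2 = 2^(m+1) := by
  induction m with
  | zero =>
    unfold P Q
    simp [rs, ee_zero]
    norm_num
  | succ m ih =>
    rw [P_succ, Q_succ, para, norm_mul, ee_norm, one_mul]
    rw [pow_succ 2 (m+1)]
    calc 2*‖P m x‖^2 + 2*‖Q m x‖^2 = 2 * (‖P m x‖^2 + ‖Q m x‖^2) := by ring
    _ = 2^(m+1) * 2 := by rw [ih]; ring

lemma memLp01 {F : ℝ → ℝ} (hF : Continuous F) (r : ENNReal) :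
    MemLp F r (volume.restrict (Set.Ioc (0:ℝ) 1)) := by
  haveI : IsFiniteMeasure (volume.restrict (Set.Ioc (0:ℝ) 1)) := by
    constructor
    rw [Measure.restrict_apply_univ]
    simp [Real.volume_Ioc]
  obtain ⟨C, hC⟩ := (isCompact_Icc (a := (0:ℝ)) (b := 1)).exists_bound_of_continuousOn
    hF.continuousOn
  exact MemLp.of_bound hF.aestronglyMeasurable.restrict C
    (((ae_restrict_iff' measurableSet_Ioc).2 (Filter.Eventually.of_forall
      fun x hx => hC x (Set.Ioc_subset_Icc_self hx))))

lemma holder01 {F G : ℝ → ℝ} (hF : Continuous F) (hG : Continuous G)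
    (hF0 : ∀ x, 0 ≤ F x) (hG0 : ∀ x, 0 ≤ G x) {r s : ℝ} (hrs : Real.HolderConjugate r s) :
    ∫ x in (0:ℝ)..1, F x * G x ≤
      (∫ x in (0:ℝ)..1, F x ^ r) ^ (1/r) * (∫ x in (0:ℝ)..1, G x ^ s) ^ (1/s) := by
  have h01 : (0:ℝ) ≤ 1 := zero_le_one
  rw [intervalIntegral.integral_of_le h01, intervalIntegral.integral_of_le h01,
    intervalIntegral.integral_of_le h01]
  have key := MeasureTheory.integral_mul_norm_le_Lp_mul_Lq (μ := volume.restrict (Set.Ioc (0:ℝ) 1))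
    (f := F) (g := G) hrs (memLp01 hF _) (memLp01 hG _)
  have e1 : ∀ x : ℝ, ‖F x‖ * ‖G x‖ = F x * G x := fun x => by
    rw [Real.norm_of_nonneg (hF0 x), Real.norm_of_nonneg (hG0 x)]
  have e2 : ∀ x : ℝ, ‖F x‖ ^ r = F x ^ r := fun x => by rw [Real.norm_of_nonneg (hF0 x)]
  have e3 : ∀ x : ℝ, ‖G x‖ ^ s = G x ^ s := fun x => by rw [Real.norm_of_nonneg (hG0 x)]
  simp only [e1, e2, e3] at key
  exact key

lemma pow_mean_mono {F : ℝ → ℝ} (hF : Continuous F) (hF0 : ∀ x, 0 ≤ F x) {a b : ℝ}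
    (ha : 0 < a) (hab : a ≤ b) :
    (∫ x in (0:ℝ)..1, F x ^ a) ≤ (∫ x in (0:ℝ)..1, F x ^ b) ^ (a/b) := by
  rcases eq_or_lt_of_le hab with h | h
  · subst h
    rw [div_self ha.ne', Real.rpow_one]
  · have hb : 0 < b := ha.trans h
    have hr1 : 1 < b / a := (one_lt_div ha).2 h
    set s : ℝ := (b/a) / (b/a - 1) with hs
    have hrs : Real.HolderConjugate (b/a) s := Real.HolderConjugate.conjExponent hr1
    have hFa : Continuous fun x => F x ^ a := hF.rpow_const fun x => Or.inr ha.le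
    have hFa0 : ∀ x, 0 ≤ F x ^ a := fun x => Real.rpow_nonneg (hF0 x) a
    have key := holder01 hFa continuous_const hFa0 (fun _ => zero_le_one) hrs
    have e1 : ∀ x : ℝ, F x ^ a * (1:ℝ) = F x ^ a := fun x => mul_one _
    have e2 : ∀ x : ℝ, (F x ^ a) ^ (b/a) = F x ^ b := fun x => by
      rw [← Real.rpow_mul (hF0 x), mul_div_cancel₀ _ ha.ne']
    have e3 : ∀ x : ℝ, (1:ℝ) ^ s = 1 := fun x => Real.one_rpow s
    simp only [e1, e2, e3] at key
    rw [intervalIntegral.integral_const] at key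
    simp only [smul_eq_mul, sub_zero, one_mul, mul_one, Real.one_rpow] at key
    calc ∫ x in (0:ℝ)..1, F x ^ a ≤ (∫ x in (0:ℝ)..1, F x ^ b) ^ (1/(b/a)) := by
          simpa using key
      _ = (∫ x in (0:ℝ)..1, F x ^ b) ^ (a/b) := by rw [one_div_div]

lemma interp {F : ℝ → ℝ} (hF : Continuous F) (hF0 : ∀ x, 0 ≤ F x) {t : ℝ}
    (h1 : 1 < t) (h2 : t < 2) :
    (∫ x in (0:ℝ)..1, F x ^ t) ≤
      (∫ x in (0:ℝ)..1, F x) ^ (2 - t) * (∫ x in (0:ℝ)..1, F x ^ (2:ℝ)) ^ (t - 1) := by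
  have h2t : 0 < 2 - t := by linarith
  have ht1 : 0 < t - 1 := by linarith
  have hrs : Real.HolderConjugate (1/(2-t)) (1/(t-1)) := by
    rw [Real.holderConjugate_iff]; constructor
    · rw [lt_div_iff₀ h2t]; linarith
    · simp only [one_div, inv_inv]; ring
  have hFc1 : Continuous fun x => F x ^ (2-t) := hF.rpow_const fun x => Or.inr h2t.le
  have hFc2 : Continuous fun x => F x ^ (2*(t-1)) := hF.rpow_const fun x => Or.inr (by linarith)
  have key := holder01 hFc1 hFc2 (fun x => Real.rpow_nonneg (hF0 x) _)
    (fun x => Real.rpow_nonneg (hF0 x) _) hrs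
  have e1 : ∀ x : ℝ, F x ^ (2-t) * F x ^ (2*(t-1)) = F x ^ t := fun x => by
    rw [← Real.rpow_add_of_nonneg (hF0 x) h2t.le (by linarith)]
    congr 1; ring
  have e2 : ∀ x : ℝ, (F x ^ (2-t)) ^ (1/(2-t)) = F x := fun x => by
    rw [← Real.rpow_mul (hF0 x), mul_one_div, div_self h2t.ne', Real.rpow_one]
  have e3 : ∀ x : ℝ, (F x ^ (2*(t-1))) ^ (1/(t-1)) = F x ^ (2:ℝ) := fun x => by
    rw [← Real.rpow_mul (hF0 x), mul_one_div, mul_div_assoc, div_self ht1.ne', mul_one]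
  simp only [e1, e2, e3] at key
  rw [one_div_one_div, one_div_one_div] at key
  exact key

noncomputable def DD (n : ℕ) (x : ℝ) : ℂ := ∑ k ∈ range n, ee k x

lemma ee_pow (k : ℕ) (x : ℝ) : ee k x = (ee 1 x) ^ k := by
  unfold ee
  rw [← Complex.exp_nat_mul]
  congr 1
  push_cast
  ring

lemma DD_le (n : ℕ) (x : ℝ) : ‖DD n x‖ ≤ n := by
  unfold DD
  calc ‖∑ k ∈ range n, ee k x‖ ≤ ∑ k ∈ range n, ‖ee k x‖ := norm_sum_le _ _
    _ = n := by
      rw [Finset.sum_congr rfl (fun k _ => ee_norm k x)]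
      simp

lemma norm_ee_one_sub_one (x : ℝ) : ‖ee 1 x - 1‖ = 2 * |Real.sin (Real.pi * x)| := by
  have : ee 1 x = Complex.exp ((2 * Real.pi * x : ℝ) * Complex.I) := by
    unfold ee; congr 1; push_cast; ring
  rw [this, Complex.exp_mul_I]
  have hre : ∀ a b : ℝ, ‖(Complex.cos a + Complex.sin a * Complex.I) - 1‖ ^ 2
      = (Real.cos a - 1)^2 + (Real.sin a)^2 := by
    intro a b
    rw [Complex.sq_norm, Complex.normSq_apply]
    simp [Complex.cos_ofReal_re, Complex.sin_ofReal_re]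
    ring
  have h2 : ‖(Complex.cos (2 * Real.pi * x : ℝ) + Complex.sin (2 * Real.pi * x : ℝ) * Complex.I) - 1‖ ^ 2
      = (2 * |Real.sin (Real.pi * x)|) ^ 2 := by
    rw [hre _ 0]
    have hmm : 2 * Real.pi * x = 2 * (Real.pi * x) := by ring
    rw [hmm, Real.cos_two_mul, Real.sin_two_mul,
      show (2 * |Real.sin (Real.pi * x)|)^2 = 4 * Real.sin (Real.pi*x)^2 by
        rw [mul_pow, sq_abs]; ring]
    nlinarith [Real.sin_sq_add_cos_sq (Real.pi * x)]
  have hn : (0:ℝ) ≤ 2 * |Real.sin (Real.pi * x)| := by positivity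
  nlinarith [norm_nonneg ((Complex.cos (2 * Real.pi * x : ℝ) + Complex.sin (2 * Real.pi * x : ℝ) * Complex.I) - 1)]

lemma sin_ge_two_min {x : ℝ} (hx0 : 0 < x) (hx1 : x < 1) :
    2 * min x (1 - x) ≤ Real.sin (Real.pi * x) := by
  rcases le_or_gt x (1/2) with h | h
  · have hmin : min x (1-x) = x := min_eq_left (by linarith)
    rw [hmin]
    have := Real.mul_le_sin (x := Real.pi * x) (by positivity)
      (by nlinarith [Real.pi_pos])
    calc 2 * x = 2 / Real.pi * (Real.pi * x) := by
          field_simp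
      _ ≤ Real.sin (Real.pi * x) := this
  · have hmin : min x (1-x) = 1 - x := min_eq_right (by linarith)
    rw [hmin]
    have hxx : Real.sin (Real.pi * x) = Real.sin (Real.pi * (1 - x)) := by
      rw [show Real.pi * (1 - x) = Real.pi - Real.pi * x by ring, Real.sin_pi_sub]
    rw [hxx]
    have := Real.mul_le_sin (x := Real.pi * (1 - x)) (by nlinarith [Real.pi_pos])
      (by nlinarith [Real.pi_pos])
    calc 2 * (1 - x) = 2 / Real.pi * (Real.pi * (1 - x)) := by
          field_simp
      _ ≤ Real.sin (Real.pi * (1 - x)) := this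

lemma DD_bound (n : ℕ) {x : ℝ} (hx0 : 0 < x) (hx1 : x < 1) :
    ‖DD n x‖ ≤ 1 / (2 * min x (1 - x)) := by
  have hmin : 0 < min x (1 - x) := lt_min hx0 (by linarith)
  have hsin : 2 * min x (1 - x) ≤ Real.sin (Real.pi * x) := sin_ge_two_min hx0 hx1
  have hz : ee 1 x ≠ 1 := by
    intro h
    have : ‖ee 1 x - 1‖ = 0 := by rw [h]; simp
    rw [norm_ee_one_sub_one] at this
    have habs : |Real.sin (Real.pi * x)| = 0 := by linarith
    rw [abs_eq_zero] at habs
    nlinarith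
  have hgeom : DD n x = (ee 1 x ^ n - 1) / (ee 1 x - 1) := by
    unfold DD
    rw [Finset.sum_congr rfl (fun k (_ : k ∈ range n) => ee_pow k x)]
    exact geom_sum_eq hz n
  rw [hgeom, norm_div]
  have hnum : ‖ee 1 x ^ n - 1‖ ≤ 2 := by
    calc ‖ee 1 x ^ n - 1‖ ≤ ‖ee 1 x ^ n‖ + ‖(1:ℂ)‖ := norm_sub_le _ _
      _ = 2 := by
        rw [norm_pow, ee_norm]; norm_num
  have hden : 2 * (2 * min x (1 - x)) ≤ ‖ee 1 x - 1‖ := by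
    rw [norm_ee_one_sub_one]
    have : Real.sin (Real.pi * x) ≤ |Real.sin (Real.pi * x)| := le_abs_self _
    nlinarith
  have hden0 : 0 < ‖ee 1 x - 1‖ := by
    rw [norm_pos_iff, sub_ne_zero]
    exact hz
  rw [div_le_div_iff₀ hden0 (by positivity)]
  nlinarith [norm_nonneg (ee 1 x ^ n - 1)]

lemma DD_cont (n : ℕ) : Continuous (fun x => ‖DD n x‖) := by
  apply Continuous.norm
  unfold DD
  exact continuous_finset_sum _ fun k _ => ee_cont k

lemma half_log_int {a : ℝ} (ha : 0 < a) (hab : a ≤ 1/2) :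
    ∫ x in a..(1/2:ℝ), 1/(2*x) = (1/2) * Real.log ((1/2)/a) := by
  have : ∀ x : ℝ, 1/(2*x) = (1/2) * (1/x) := fun x => by
    rcases eq_or_ne x 0 with h | h
    · simp [h]
    · field_simp
  simp only [this]
  rw [intervalIntegral.integral_const_mul, integral_one_div]
  intro h
  rw [Set.mem_uIcc] at h
  rcases h with ⟨h1, h2⟩ | ⟨h1, h2⟩ <;> linarith

lemma oneDiv2x_integrable {a b : ℝ} (ha : 0 < a) (hab : a ≤ b) :
    IntervalIntegrable (fun x => 1/(2*x)) volume a b := by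
  apply ContinuousOn.intervalIntegrable
  apply ContinuousOn.div continuousOn_const
  · exact (continuousOn_const.mul continuousOn_id)
  · intro x hx
    rw [Set.uIcc_of_le hab] at hx
    have : 0 < x := lt_of_lt_of_le ha hx.1
    positivity

lemma DD_L1 (n : ℕ) (hn : 1 ≤ n) :
    ∫ x in (0:ℝ)..1, ‖DD n x‖ ≤ 1 + Real.log n := by
  have hn0 : (0:ℝ) < n := by exact_mod_cast hn
  set a : ℝ := 1/(2*n) with ha_def
  have ha : 0 < a := by positivity
  have ha2 : a ≤ 1/2 := by
    have h1 : (1:ℝ) ≤ n := by exact_mod_cast hn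
    rw [ha_def, div_le_div_iff₀ (by positivity) (by norm_num)]
    nlinarith
  have h1a : 1/2 ≤ 1 - a := by linarith
  have h1a' : 1 - a ≤ 1 := by linarith
  have hFi : ∀ u v : ℝ, IntervalIntegrable (fun x => ‖DD n x‖) volume u v :=
    fun u v => (DD_cont n).intervalIntegrable u v
  have hlogn : Real.log ((1/2)/a) = Real.log n := by
    congr 1
    rw [ha_def]
    field_simp
  -- split
  have hsplit : ∫ x in (0:ℝ)..1, ‖DD n x‖ =
      (∫ x in (0:ℝ)..a, ‖DD n x‖) + (∫ x in a..(1/2:ℝ), ‖DD n x‖)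
      + (∫ x in (1/2:ℝ)..(1-a), ‖DD n x‖) + (∫ x in (1-a)..(1:ℝ), ‖DD n x‖) := by
    rw [← integral_add_adjacent_intervals (hFi 0 a) (hFi a 1),
      ← integral_add_adjacent_intervals (hFi a (1/2)) (hFi (1/2) 1),
      ← integral_add_adjacent_intervals (hFi (1/2) (1-a)) (hFi (1-a) 1)]
    ring
  rw [hsplit]
  have B1 : (∫ x in (0:ℝ)..a, ‖DD n x‖) ≤ 1/2 := by
    calc (∫ x in (0:ℝ)..a, ‖DD n x‖) ≤ ∫ x in (0:ℝ)..a, (n:ℝ) := by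
          apply intervalIntegral.integral_mono_on ha.le (hFi 0 a)
            (intervalIntegrable_const)
          exact fun x _ => DD_le n x
      _ = 1/2 := by
          rw [intervalIntegral.integral_const, smul_eq_mul, sub_zero, ha_def]
          field_simp
  have B4 : (∫ x in (1-a)..(1:ℝ), ‖DD n x‖) ≤ 1/2 := by
    calc (∫ x in (1-a)..(1:ℝ), ‖DD n x‖) ≤ ∫ x in (1-a)..(1:ℝ), (n:ℝ) := by
          apply intervalIntegral.integral_mono_on (by linarith) (hFi _ _)
            (intervalIntegrable_const)
          exact fun x _ => DD_le n x
      _ = 1/2 := by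
          rw [intervalIntegral.integral_const, smul_eq_mul, ha_def]
          field_simp
          ring
  have B2 : (∫ x in a..(1/2:ℝ), ‖DD n x‖) ≤ (1/2) * Real.log n := by
    calc (∫ x in a..(1/2:ℝ), ‖DD n x‖) ≤ ∫ x in a..(1/2:ℝ), 1/(2*x) := by
          apply intervalIntegral.integral_mono_on ha2 (hFi _ _) (oneDiv2x_integrable ha ha2)
          intro x hx
          have hx0 : 0 < x := lt_of_lt_of_le ha hx.1
          have hx1 : x < 1 := lt_of_le_of_lt hx.2 (by norm_num)
          have hmin : min x (1-x) = x := min_eq_left (by cases hx; linarith)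
          calc ‖DD n x‖ ≤ 1/(2 * min x (1-x)) := DD_bound n hx0 hx1
            _ = 1/(2*x) := by rw [hmin]
      _ = (1/2) * Real.log n := by rw [half_log_int ha ha2, hlogn]
  have B3 : (∫ x in (1/2:ℝ)..(1-a), ‖DD n x‖) ≤ (1/2) * Real.log n := by
    calc (∫ x in (1/2:ℝ)..(1-a), ‖DD n x‖) ≤ ∫ x in (1/2:ℝ)..(1-a), 1/(2*(1-x)) := by
          apply intervalIntegral.integral_mono_on h1a (hFi _ _)
          · have := ((oneDiv2x_integrable ha ha2).comp_sub_left 1).symm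
            have h12 : (1:ℝ) - 1/2 = 1/2 := by norm_num
            rw [h12] at this
            exact this
          intro x hx
          have hx0 : 0 < x := lt_of_lt_of_le (by norm_num) hx.1
          have hx1 : x < 1 := lt_of_le_of_lt hx.2 (by linarith)
          have hmin : min x (1-x) = 1-x := min_eq_right (by cases hx; linarith)
          calc ‖DD n x‖ ≤ 1/(2 * min x (1-x)) := DD_bound n hx0 hx1
            _ = 1/(2*(1-x)) := by rw [hmin]
      _ = ∫ x in a..(1/2:ℝ), 1/(2*x) := by
          have := intervalIntegral.integral_comp_sub_left (a := (1/2:ℝ)) (b := 1-a)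
            (fun x => 1/(2*x)) 1
          simp only [show (1:ℝ) - (1-a) = a by ring, show (1:ℝ) - 1/2 = 1/2 by norm_num] at this
          exact this
      _ = (1/2) * Real.log n := by rw [half_log_int ha ha2, hlogn]
  have hlog0 : 0 ≤ Real.log n := Real.log_nonneg (by exact_mod_cast hn)
  linarith

lemma exists_good_M (c δ : ℝ) (hc : 0 < c) (hδ : 0 < δ) :
    ∃ M : ℕ, 1 + Real.log (((2:ℕ)^M : ℕ) : ℝ) ≤ c * ((((2:ℕ)^M : ℕ) : ℝ)) ^ δ := by
  have hlo := isLittleO_log_rpow_atTop hδ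
  have h1 : ∀ᶠ x : ℝ in atTop, ‖Real.log x‖ ≤ (c/2) * ‖x ^ δ‖ :=
    hlo.def (by positivity)
  have h2 : ∀ᶠ x : ℝ in atTop, 2/c ≤ x ^ δ :=
    (tendsto_rpow_atTop hδ).eventually_ge_atTop (2/c)
  have h3 : ∀ᶠ x : ℝ in atTop, (1:ℝ) ≤ x := eventually_ge_atTop 1
  have key : ∀ᶠ x : ℝ in atTop, 1 + Real.log x ≤ c * x ^ δ := by
    filter_upwards [h1, h2, h3] with x hx1 hx2 hx3
    have hxpos : (0:ℝ) < x := by linarith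
    have hlog : 0 ≤ Real.log x := Real.log_nonneg hx3
    have hrp : 0 ≤ x ^ δ := Real.rpow_nonneg hxpos.le δ
    rw [Real.norm_of_nonneg hlog, Real.norm_of_nonneg hrp] at hx1
    have : (1:ℝ) ≤ (c/2) * x ^ δ := by
      rw [div_mul_eq_mul_div, le_div_iff₀ (by norm_num)]
      calc (1:ℝ) * 2 = c * (2/c) := by field_simp
        _ ≤ c * x^δ := by
          apply mul_le_mul_of_nonneg_left hx2 hc.le
    linarith
  have htend : Tendsto (fun M : ℕ => ((((2:ℕ)^M : ℕ)) : ℝ)) atTop atTop := by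
    have : Tendsto (fun M : ℕ => ((2:ℝ))^M) atTop atTop :=
      tendsto_pow_atTop_atTop_of_one_lt (by norm_num)
    convert this using 2 with M
    push_cast
    ring
  obtain ⟨M, hM⟩ := (htend.eventually key).exists
  exact ⟨M, hM⟩


lemma const_simp (q : ℝ) (hq0 : 0 < q) (hq2 : q < 2) (n : ℕ) (hn : (1:ℝ) ≤ n) :
    ((n:ℝ) / Real.sqrt (2*n) ^ (2-q)) ^ (1/q) = (2:ℝ)^(-((2-q)/(2*q))) * (n:ℝ)^(1/2:ℝ) := by
  have hnpos : (0:ℝ) < n := by linarith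
  have h2n : (0:ℝ) < 2*(n:ℝ) := by positivity
  rw [Real.sqrt_eq_rpow, ← Real.rpow_mul h2n.le,
      Real.mul_rpow (by norm_num : (0:ℝ) ≤ 2) hnpos.le]
  have e : (n:ℝ) / ((2:ℝ)^((1/2)*(2-q)) * (n:ℝ)^((1/2)*(2-q)))
      = (2:ℝ)^(-((1/2)*(2-q))) * (n:ℝ)^(1-(1/2)*(2-q)) := by
    rw [Real.rpow_neg (by norm_num : (0:ℝ) ≤ 2), Real.rpow_sub hnpos, Real.rpow_one]
    ring
  rw [e, Real.mul_rpow (Real.rpow_nonneg (by norm_num) _) (Real.rpow_nonneg hnpos.le _),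
    ← Real.rpow_mul (by norm_num : (0:ℝ) ≤ 2), ← Real.rpow_mul hnpos.le]
  congr 1
  · congr 1
    field_simp
  · congr 1
    field_simp
    ring


/-- For `0 < q ≤ p < 2` and `ε > 0`, there are `n ≥ 1` and signs
`η_0, …, η_{n-1} ∈ {−1, +1}` with
`‖D_n‖_{L^p(𝕋)} ≤ ε ‖∑_{k<n} η_k e_k‖_{L^q(𝕋)}`. -/
theorem dirichlet_small_against_random_signs
    (p q : ℝ) (hq0 : 0 < q) (hqp : q ≤ p) (hp2 : p < 2)
    (ε : ℝ) (hε : 0 < ε) :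
    ∃ (n : ℕ) (η : ℕ → ℝ), 1 ≤ n ∧ (∀ k < n, η k = 1 ∨ η k = -1) ∧
      (∫ x in (0 : ℝ)..1,
          ‖∑ k ∈ Finset.range n,
              Complex.exp (2 * Real.pi * Complex.I * (k : ℂ) * (x : ℂ))‖ ^ p) ^ (1 / p) ≤
        ε * (∫ x in (0 : ℝ)..1,
          ‖∑ k ∈ Finset.range n,
              (η k : ℂ) * Complex.exp (2 * Real.pi * Complex.I * (k : ℂ) * (x : ℂ))‖ ^ q) ^ (1 / q) := by
  have hp0 : 0 < p := lt_of_lt_of_le hq0 hqp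
  have hq2 : q < 2 := lt_of_le_of_lt hqp hp2
  set p' : ℝ := max p (3/2) with hp'def
  have hp'1 : (1:ℝ) < p' := lt_of_lt_of_le (by norm_num) (le_max_right _ _)
  have hp'2 : p' < 2 := max_lt hp2 (by norm_num)
  have hpp' : p ≤ p' := le_max_left _ _
  have hp'pos : (0:ℝ) < p' := by linarith
  have hδ : 0 < 1/2 - (p'-1)/p' := by
    rw [sub_pos, div_lt_iff₀ hp'pos]
    nlinarith
  set cq : ℝ := (2:ℝ) ^ (-((2-q)/(2*q))) with hcq_def
  have hcqpos : 0 < cq := Real.rpow_pos_of_pos (by norm_num) _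
  obtain ⟨M, hM⟩ := exists_good_M (ε * cq) _ (by positivity) hδ
  set n : ℕ := 2^M with hn_def
  have hn1 : 1 ≤ n := Nat.one_le_two_pow
  have hnR : (1:ℝ) ≤ (n:ℝ) := by exact_mod_cast hn1
  have hnpos : (0:ℝ) < (n:ℝ) := by linarith
  refine ⟨n, (rs M).1, hn1, fun k _ => (rs_sign M k).1, ?_⟩
  show (∫ x in (0:ℝ)..1, ‖DD n x‖ ^ p) ^ (1/p) ≤
    ε * (∫ x in (0:ℝ)..1, ‖P M x‖ ^ q) ^ (1/q)
  set F : ℝ → ℝ := fun x => ‖DD n x‖ with hF_def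
  set G : ℝ → ℝ := fun x => ‖P M x‖ with hG_def
  have hFc : Continuous F := DD_cont n
  have hF0 : ∀ x, 0 ≤ F x := fun x => norm_nonneg _
  have hGc : Continuous G := by
    apply Continuous.norm
    unfold P
    exact continuous_finset_sum _ fun k _ => continuous_const.mul (ee_cont k)
  have hG0 : ∀ x, 0 ≤ G x := fun x => norm_nonneg _
  have hlog0 : (0:ℝ) ≤ Real.log n := Real.log_nonneg hnR
  have hl : (0:ℝ) ≤ 1 + Real.log n := by linarith
  -- Parseval for D_n
  have hD2 : (∫ x in (0:ℝ)..1, F x ^ (2:ℝ)) = (n:ℝ) := by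
    have hpar := parseval (fun _ => 1) n
    simp only [Complex.ofReal_one, one_mul, one_pow] at hpar
    have h2 : ∀ x:ℝ, F x ^ (2:ℝ) = F x ^ (2:ℕ) := fun x => by
      rw [show (2:ℝ) = ((2:ℕ):ℝ) by norm_num, Real.rpow_natCast]
    simp only [h2]
    rw [hF_def]
    simp only [DD]
    rw [hpar]
    simp
  -- Parseval for the RS polynomial
  have hG2 : (∫ x in (0:ℝ)..1, G x ^ (2:ℝ)) = (n:ℝ) := by
    have hpar := parseval (rs M).1 n
    have h2 : ∀ x:ℝ, G x ^ (2:ℝ) = G x ^ (2:ℕ) := fun x => by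
      rw [show (2:ℝ) = ((2:ℕ):ℝ) by norm_num, Real.rpow_natCast]
    simp only [h2]
    rw [hG_def]
    simp only [P, ← hn_def]
    rw [hpar]
    have hsq : ∀ k ∈ Finset.range n, ((rs M).1 k)^2 = (1:ℝ) := by
      intro k _
      rcases (rs_sign M k).1 with h | h <;> rw [h] <;> norm_num
    rw [Finset.sum_congr rfl hsq]
    simp
  -- sup bound for the RS polynomial
  have hGsup : ∀ x, G x ≤ Real.sqrt (2*(n:ℝ)) := by
    intro x
    have h := rs_norm M x
    have h2 : (2:ℝ)^(M+1) = 2 * (n:ℝ) := by rw [hn_def]; push_cast; ring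
    have h1 : G x ^ 2 ≤ 2 * (n:ℝ) := by
      rw [← h2]
      nlinarith [sq_nonneg ‖Q M x‖]
    nlinarith [Real.sq_sqrt (by positivity : (0:ℝ) ≤ 2*(n:ℝ)),
      Real.sqrt_nonneg (2*(n:ℝ)), hG0 x]
  -- lower bound for ∫ G^q
  have hs2q : (0:ℝ) < Real.sqrt (2*(n:ℝ)) ^ (2-q) :=
    Real.rpow_pos_of_pos (Real.sqrt_pos.2 (by positivity)) _
  have hGq_int : IntervalIntegrable (fun x => G x ^ q) MeasureTheory.volume 0 1 :=
    (hGc.rpow_const fun x => Or.inr hq0.le).intervalIntegrable _ _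
  have hstep : (n:ℝ) ≤ Real.sqrt (2*(n:ℝ)) ^ (2-q) * ∫ x in (0:ℝ)..1, G x ^ q := by
    have hpt : ∀ x ∈ Set.Icc (0:ℝ) 1, G x ^ (2:ℝ) ≤ Real.sqrt (2*(n:ℝ)) ^ (2-q) * G x ^ q := by
      intro x _
      have hsplit2 : G x ^ (2:ℝ) = G x ^ q * G x ^ (2-q) := by
        rw [← Real.rpow_add_of_nonneg (hG0 x) hq0.le (by linarith)]
        norm_num
      rw [hsplit2, mul_comm (G x ^ q)]
      exact mul_le_mul_of_nonneg_right
        (Real.rpow_le_rpow (hG0 x) (hGsup x) (by linarith))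
        (Real.rpow_nonneg (hG0 x) q)
    calc (n:ℝ) = (∫ x in (0:ℝ)..1, G x ^ (2:ℝ)) := hG2.symm
      _ ≤ ∫ x in (0:ℝ)..1, Real.sqrt (2*(n:ℝ)) ^ (2-q) * G x ^ q := by
          apply intervalIntegral.integral_mono_on zero_le_one
            ((hGc.rpow_const fun x => Or.inr (by norm_num)).intervalIntegrable _ _)
            (hGq_int.const_mul _) hpt
      _ = Real.sqrt (2*(n:ℝ)) ^ (2-q) * ∫ x in (0:ℝ)..1, G x ^ q := by
          rw [intervalIntegral.integral_const_mul]
  have hJ : (n:ℝ) / Real.sqrt (2*(n:ℝ)) ^ (2-q) ≤ ∫ x in (0:ℝ)..1, G x ^ q := by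
    rw [div_le_iff₀ hs2q]
    nlinarith [intervalIntegral.integral_nonneg (μ := MeasureTheory.volume) zero_le_one
      (fun x (_ : x ∈ Set.Icc (0:ℝ) 1) => Real.rpow_nonneg (hG0 x) q)]
  calc (∫ x in (0:ℝ)..1, F x ^ p) ^ (1/p)
      ≤ ((∫ x in (0:ℝ)..1, F x ^ p') ^ (p/p')) ^ (1/p) :=
        Real.rpow_le_rpow
          (intervalIntegral.integral_nonneg zero_le_one fun x _ => Real.rpow_nonneg (hF0 x) p)
          (pow_mean_mono hFc hF0 hp0 hpp') (by positivity)
    _ = (∫ x in (0:ℝ)..1, F x ^ p') ^ (1/p') := by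
        rw [← Real.rpow_mul
          (intervalIntegral.integral_nonneg zero_le_one fun x _ => Real.rpow_nonneg (hF0 x) p')]
        congr 1
        field_simp
    _ ≤ ((1 + Real.log n) ^ (2-p') * (n:ℝ) ^ (p'-1)) ^ (1/p') := by
        apply Real.rpow_le_rpow
          (intervalIntegral.integral_nonneg zero_le_one fun x _ => Real.rpow_nonneg (hF0 x) p')
          ?_ (by positivity)
        calc (∫ x in (0:ℝ)..1, F x ^ p')
            ≤ (∫ x in (0:ℝ)..1, F x) ^ (2-p') * (∫ x in (0:ℝ)..1, F x ^ (2:ℝ)) ^ (p'-1) :=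
              interp hFc hF0 hp'1 hp'2
          _ ≤ (1 + Real.log n) ^ (2-p') * (n:ℝ) ^ (p'-1) := by
              rw [hD2]
              apply mul_le_mul_of_nonneg_right ?_ (Real.rpow_nonneg hnpos.le _)
              exact Real.rpow_le_rpow
                (intervalIntegral.integral_nonneg zero_le_one fun x _ => hF0 x)
                (DD_L1 n hn1) (by linarith)
    _ = (1 + Real.log n) ^ ((2-p')/p') * (n:ℝ) ^ ((p'-1)/p') := by
        rw [Real.mul_rpow (Real.rpow_nonneg hl _) (Real.rpow_nonneg hnpos.le _),
          ← Real.rpow_mul hl, ← Real.rpow_mul hnpos.le, mul_one_div, mul_one_div]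
    _ ≤ (1 + Real.log n) * (n:ℝ) ^ ((p'-1)/p') := by
        apply mul_le_mul_of_nonneg_right ?_ (Real.rpow_nonneg hnpos.le _)
        have h1 : (1:ℝ) ≤ 1 + Real.log n := by linarith
        calc (1 + Real.log (n:ℝ)) ^ ((2-p')/p') ≤ (1 + Real.log (n:ℝ)) ^ (1:ℝ) :=
              Real.rpow_le_rpow_of_exponent_le h1 (by rw [div_le_one hp'pos]; linarith)
          _ = 1 + Real.log (n:ℝ) := Real.rpow_one _
    _ ≤ (ε * cq * (n:ℝ) ^ (1/2 - (p'-1)/p')) * (n:ℝ) ^ ((p'-1)/p') :=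
        mul_le_mul_of_nonneg_right hM (Real.rpow_nonneg hnpos.le _)
    _ = ε * (cq * (n:ℝ) ^ (1/2:ℝ)) := by
        rw [mul_assoc (ε*cq), ← Real.rpow_add hnpos,
          show 1/2 - (p'-1)/p' + (p'-1)/p' = (1/2:ℝ) by ring]
        ring
    _ = ε * ((n:ℝ) / Real.sqrt (2*(n:ℝ)) ^ (2-q)) ^ (1/q) := by
        rw [const_simp q hq0 hq2 n hnR]
    _ ≤ ε * (∫ x in (0:ℝ)..1, G x ^ q) ^ (1/q) := by
        apply mul_le_mul_of_nonneg_left ?_ hε.le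
        exact Real.rpow_le_rpow (by positivity) hJ (by positivity)
end

section
/- Let N ≥ 1 and n ≥ 1 be integers, let a ∈ ℝ, and let η_0, …, η_{n-1} ∈ {−1, +1}. Let Δ be the 1-periodic function with Δ(t) = max(1 − 2N|t|, 0) for |t| ≤ 1/2, let g(t) = ∑_{k=0}^{n-1} η_k e^{2πikt}, and let G = D_n be the Dirichlet kernel. Then the 1-periodic function f(t) = Δ(t−a) g(2Nt) + Δ(t+a) g(2Nt) + 2 Δ(t) G(2Nt) has all its Fourier coefficients nonnegative real numbers, i.e., f is positive definite. -/
open MeasureTheory Finset intervalIntegral Complex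

noncomputable def tri (N : ℕ) (t : ℝ) : ℝ := max (1 - 2 * N * |t - (round t : ℝ)|) 0

lemma tri_nonneg (N : ℕ) (t : ℝ) : 0 ≤ tri N t := le_max_right _ _

lemma tri_le_one (N : ℕ) (t : ℝ) : tri N t ≤ 1 :=
  max_le (by nlinarith [abs_nonneg (t - (round t : ℝ)), Nat.cast_nonneg (α := ℝ) N]) zero_le_one

lemma tri_periodic (N : ℕ) : Function.Periodic (tri N) 1 := by
  intro t
  unfold tri
  have : round (t + 1) = round t + 1 := by
    have := round_add_intCast t 1
    simpa using this
  rw [this]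
  push_cast
  ring_nf

lemma sub_round_eq (t : ℝ) : t - (round t : ℝ) = Int.fract (t + 1/2) - 1/2 := by
  rw [round_eq, Int.fract]
  ring

lemma tri_measurable (N : ℕ) : Measurable (tri N) := by
  have : tri N = fun t : ℝ => max (1 - 2 * (N:ℝ) * |Int.fract (t + 1/2) - 1/2|) 0 := by
    funext t; unfold tri; rw [sub_round_eq]
  rw [this]
  exact (((measurable_const.sub ((measurable_const.mul (((measurable_fract.comp (measurable_id.add_const _)).sub_const _).abs)))) ).max measurable_const)

noncomputable def eI (x : ℝ) : ℂ := Complex.exp ((x : ℂ) * Complex.I)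

lemma eI_add (x y : ℝ) : eI (x + y) = eI x * eI y := by
  unfold eI; rw [← Complex.exp_add]; push_cast; ring_nf

lemma eI_norm (x : ℝ) : ‖eI x‖ = 1 := by
  simp [eI, Complex.norm_exp_ofReal_mul_I]

lemma eI_int (j : ℤ) : eI (2 * Real.pi * j) = 1 := by
  unfold eI
  have := Complex.exp_int_mul_two_pi_mul_I j
  rw [← this]; congr 1; push_cast; ring

lemma eI_hasDerivAt (x : ℝ) (t : ℝ) :
    HasDerivAt (fun t : ℝ => eI (x * t)) ((x : ℂ) * Complex.I * eI (x * t)) t := by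
  have h1 : HasDerivAt (fun t : ℝ => ((x * t : ℝ) : ℂ) * Complex.I) ((x:ℂ) * Complex.I) t := by
    have h0 : HasDerivAt (fun t : ℝ => ((x * t : ℝ) : ℂ)) (x : ℂ) t := by
      have := (Complex.ofRealCLM.hasDerivAt (x := t)).const_mul (x : ℂ)
      simpa using this
    simpa using h0.mul_const Complex.I
  have := h1.cexp
  simpa [eI, mul_comm] using this

lemma eI_continuous : Continuous eI := by
  unfold eI; fun_prop

lemma tri_eI_integrable (N : ℕ) (b x : ℝ) (lo hi : ℝ) :
    IntervalIntegrable (fun t : ℝ => (tri N (t - b) : ℂ) * eI (x * t)) volume lo hi := by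
  apply (_root_.intervalIntegrable_const (c := (1:ℝ)) (μ := volume) (a := lo) (b := hi)).mono_fun
  · exact ((Complex.measurable_ofReal.comp
      ((tri_measurable N).comp (measurable_id.sub_const b))).mul
      (eI_continuous.measurable.comp (measurable_const.mul measurable_id))).aestronglyMeasurable
  · filter_upwards with t
    rw [norm_mul, eI_norm, mul_one, Complex.norm_real, Real.norm_eq_abs,
      _root_.abs_of_nonneg (tri_nonneg N _)]
    simpa using tri_le_one N _

lemma tri_eI_periodic (N : ℕ) (j : ℤ) :
    Function.Periodic (fun t : ℝ => (tri N t : ℂ) * eI (2 * Real.pi * j * t)) 1 := by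
  intro t
  simp only
  rw [tri_periodic N t]
  congr 1
  rw [mul_add, mul_one, eI_add, eI_int, mul_one]

lemma tri_shift (N : ℕ) (j : ℤ) (b : ℝ) :
    (∫ t in (0:ℝ)..1, (tri N (t - b) : ℂ) * eI (2 * Real.pi * j * t))
      = eI (2 * Real.pi * j * b) * ∫ t in (0:ℝ)..1, (tri N t : ℂ) * eI (2 * Real.pi * j * t) := by
  set θ : ℝ := 2 * Real.pi * j with hθ
  set q : ℝ → ℂ := fun u : ℝ => (tri N u : ℂ) * eI (θ * u) * eI (θ * b) with hq
  have hcong : (fun t : ℝ => (tri N (t - b) : ℂ) * eI (θ * t)) = fun t : ℝ => q (t - b) := by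
    funext t
    rw [hq]
    have h1 : eI (θ * (t - b)) * eI (θ * b) = eI (θ * t) := by
      rw [← eI_add]; congr 1; ring
    simp only
    rw [mul_assoc ((tri N (t - b) : ℝ) : ℂ) (eI (θ * (t - b))) (eI (θ * b)), h1]
  calc (∫ t in (0:ℝ)..1, (tri N (t - b) : ℂ) * eI (θ * t))
      = ∫ t in (0:ℝ)..1, q (t - b) := by rw [hcong]
    _ = ∫ u in (0:ℝ) - b..1 - b, q u := intervalIntegral.integral_comp_sub_right q b
    _ = ∫ u in (0:ℝ)..1, q u := by
        have hper : Function.Periodic q 1 := fun u => congrArg (· * eI (θ * b)) (tri_eI_periodic N j u)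
        have h2 : (0:ℝ) - b = -b := by ring
        have h3 : (1:ℝ) - b = -b + 1 := by ring
        rw [h2, h3]
        simpa using hper.intervalIntegral_add_eq (-b) 0
    _ = eI (θ * b) * ∫ u in (0:ℝ)..1, (tri N u : ℂ) * eI (θ * u) := by
        rw [hq]
        rw [intervalIntegral.integral_mul_const]
        ring

lemma poly_exp_deriv (α β : ℂ) (ω : ℝ) (t : ℝ) :
    HasDerivAt (fun t : ℝ => (α + β * (t:ℂ)) * eI (ω * t))
      ((β + (α + β * t) * (ω * Complex.I)) * eI (ω * t)) t := by
  have h1 : HasDerivAt (fun t : ℝ => α + β * (t:ℂ)) β t := by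
    have := (Complex.ofRealCLM.hasDerivAt (x := t)).const_mul β
    simpa using this.const_add α
  have : HasDerivAt (fun t : ℝ => (α + β * (t:ℂ)) * eI (ω * t)) _ t := h1.mul (eI_hasDerivAt ω t)
  convert this using 1
  ring

lemma round_abs_eq (t : ℝ) (h1 : -(1/2) ≤ t) (h2 : t ≤ 1/2) : |t - (round t : ℝ)| = |t| := by
  rcases eq_or_lt_of_le h2 with h | h
  · subst h
    have : round ((1:ℝ)/2) = 1 := by
      rw [round_eq]; norm_num
    rw [this]; norm_num
  · have : round t = 0 := by
      rw [round_eq, Int.floor_eq_zero_iff]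
      constructor <;> simp <;> linarith
    rw [this]; norm_num

lemma coef_id_p (N : ℕ) (θ : ℝ) (t : ℝ) (hω : θ ≠ 0) :
    ((1 - 2*(N:ℝ)*t : ℝ):ℂ)
      = ((2*(N:ℂ)*Complex.I/(θ:ℂ)) + ((-2*(N:ℂ)/(θ:ℂ)^2 - Complex.I/(θ:ℂ)) + (2*(N:ℂ)*Complex.I/(θ:ℂ))*(t:ℂ))*((θ:ℂ)*Complex.I)) := by
  have hωC : (θ:ℂ) ≠ 0 := Complex.ofReal_ne_zero.2 hω
  push_cast
  field_simp
  ring_nf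
  have h5 : (θ:ℂ)^5 * ((θ:ℂ)⁻¹)^5 = 1 := by
    rw [← mul_pow, mul_inv_cancel₀ hωC, one_pow]
  linear_combination ((θ:ℂ) - 2*(N:ℂ)*t*(θ:ℂ)) * Complex.I_sq

lemma coef_id_m (N : ℕ) (θ : ℝ) (t : ℝ) (hω : θ ≠ 0) :
    ((1 + 2*(N:ℝ)*t : ℝ):ℂ)
      = ((-2*(N:ℂ)*Complex.I/(θ:ℂ)) + ((2*(N:ℂ)/(θ:ℂ)^2 - Complex.I/(θ:ℂ)) + (-2*(N:ℂ)*Complex.I/(θ:ℂ))*(t:ℂ))*((θ:ℂ)*Complex.I)) := by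
  have hωC : (θ:ℂ) ≠ 0 := Complex.ofReal_ne_zero.2 hω
  push_cast
  field_simp
  ring_nf
  have h5 : (θ:ℂ)^5 * ((θ:ℂ)⁻¹)^5 = 1 := by
    rw [← mul_pow, mul_inv_cancel₀ hωC, one_pow]
  linear_combination ((θ:ℂ) + 2*(N:ℂ)*t*(θ:ℂ)) * Complex.I_sq

lemma tri_coef (N : ℕ) (hN : 1 ≤ N) (j : ℤ) :
    ∃ r : ℝ, 0 ≤ r ∧
      (∫ t in (0:ℝ)..1, (tri N t : ℂ) * eI (2 * Real.pi * j * t)) = (r : ℂ) := by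
  have hN0 : (0:ℝ) < N := by exact_mod_cast Nat.pos_of_ne_zero (by omega)
  have hN1 : (1:ℝ) ≤ N := by exact_mod_cast hN
  set L : ℝ := 1/(2*N) with hLdef
  have hL0 : 0 < L := by positivity
  have hLhalf : L ≤ 1/2 := by
    rw [hLdef, div_le_div_iff₀ (by positivity) (by norm_num)]
    linarith
  have h2NL : 2*(N:ℝ)*L = 1 := by
    rw [hLdef]; field_simp
  set θ : ℝ := 2 * Real.pi * (j:ℝ) with hθdef
  set φ : ℝ → ℝ := fun t => max (1 - 2*(N:ℝ)*|t|) 0 with hφ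
  have φcont : Continuous φ :=
    (continuous_const.sub (continuous_const.mul _root_.continuous_abs)).max continuous_const
  have hIntlin : ∀ (c0 c1 a b : ℝ),
      IntervalIntegrable (fun t : ℝ => ((c0 + c1*t : ℝ):ℂ) * eI (θ*t)) volume a b := by
    intro c0 c1 a b
    apply Continuous.intervalIntegrable
    exact (Complex.continuous_ofReal.comp
      (continuous_const.add (continuous_const.mul continuous_id))).mul
      (eI_continuous.comp (continuous_const.mul continuous_id))
  have hIntφ : ∀ (a b : ℝ),
      IntervalIntegrable (fun t : ℝ => ((φ t : ℝ):ℂ) * eI (θ*t)) volume a b := by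
    intro a b
    apply Continuous.intervalIntegrable
    exact (Complex.continuous_ofReal.comp φcont).mul
      (eI_continuous.comp (continuous_const.mul continuous_id))
  -- step 1 : reduce to [-1/2, 1/2]
  have step1 : (∫ t in (0:ℝ)..1, (tri N t : ℂ) * eI (θ * t))
      = ∫ t in (-(1/2) : ℝ)..(1/2 : ℝ), (tri N t : ℂ) * eI (θ * t) := by
    have := (tri_eI_periodic N j).intervalIntegral_add_eq 0 (-(1/2))
    norm_num at this
    rw [hθdef]
    convert this using 2 <;> norm_num
  -- step 2 : replace tri by φ
  have step2 : (∫ t in (-(1/2) : ℝ)..(1/2 : ℝ), (tri N t : ℂ) * eI (θ * t))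
      = ∫ t in (-(1/2) : ℝ)..(1/2 : ℝ), ((φ t : ℝ):ℂ) * eI (θ * t) := by
    apply intervalIntegral.integral_congr
    intro t ht
    rw [Set.uIcc_of_le (by norm_num)] at ht
    have : tri N t = φ t := by
      unfold tri
      rw [hφ]
      simp only
      rw [round_abs_eq t ht.1 ht.2]
    simp only [this]
  -- step 3 : cut off the zero parts
  have z1 : (∫ t in (-(1/2) : ℝ)..(-L), ((φ t : ℝ):ℂ) * eI (θ * t)) = 0 := by
    rw [← intervalIntegral.integral_zero (a := (-(1/2):ℝ)) (b := (-L)) (E := ℂ)]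
    apply intervalIntegral.integral_congr
    intro t ht
    rw [Set.uIcc_of_le (by linarith)] at ht
    have habs : L ≤ |t| := by
      rw [_root_.abs_of_nonpos (by linarith [ht.2])]
      linarith [ht.2]
    have : φ t = 0 := by
      rw [hφ]; simp only [max_eq_right_iff]
      nlinarith
    simp [this]
  have z2 : (∫ t in (L : ℝ)..(1/2), ((φ t : ℝ):ℂ) * eI (θ * t)) = 0 := by
    rw [← intervalIntegral.integral_zero (a := (L:ℝ)) (b := (1/2:ℝ)) (E := ℂ)]
    apply intervalIntegral.integral_congr
    intro t ht
    rw [Set.uIcc_of_le (by linarith)] at ht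
    have habs : L ≤ |t| := by
      rw [_root_.abs_of_nonneg (by linarith [ht.1])]
      exact ht.1
    have : φ t = 0 := by
      rw [hφ]; simp only [max_eq_right_iff]
      nlinarith
    simp [this]
  have split1 : (∫ t in (-(1/2) : ℝ)..(1/2 : ℝ), ((φ t : ℝ):ℂ) * eI (θ * t))
      = ∫ t in (-L : ℝ)..(L : ℝ), ((φ t : ℝ):ℂ) * eI (θ * t) := by
    rw [← intervalIntegral.integral_add_adjacent_intervals (hIntφ (-(1/2)) (-L)) (hIntφ (-L) (1/2)),
      ← intervalIntegral.integral_add_adjacent_intervals (hIntφ (-L) L) (hIntφ L (1/2)),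
      z1, z2]
    ring
  -- step 4 : explicit formulas on [-L,0] and [0,L]
  have c1 : (∫ t in (-L : ℝ)..(0:ℝ), ((φ t : ℝ):ℂ) * eI (θ * t))
      = ∫ t in (-L : ℝ)..(0:ℝ), ((1 + 2*(N:ℝ)*t : ℝ):ℂ) * eI (θ * t) := by
    apply intervalIntegral.integral_congr
    intro t ht
    rw [Set.uIcc_of_le (by linarith)] at ht
    have : φ t = 1 + 2*(N:ℝ)*t := by
      rw [hφ]; simp only
      rw [_root_.abs_of_nonpos ht.2, max_eq_left (by nlinarith [ht.1])]
      ring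
    simp only [this]
  have c2 : (∫ t in (0 : ℝ)..(L:ℝ), ((φ t : ℝ):ℂ) * eI (θ * t))
      = ∫ t in (0 : ℝ)..(L:ℝ), ((1 - 2*(N:ℝ)*t : ℝ):ℂ) * eI (θ * t) := by
    apply intervalIntegral.integral_congr
    intro t ht
    rw [Set.uIcc_of_le (by linarith)] at ht
    have : φ t = 1 - 2*(N:ℝ)*t := by
      rw [hφ]; simp only
      rw [_root_.abs_of_nonneg ht.1, max_eq_left (by nlinarith [ht.2])]
    simp only [this]
  have split2 : (∫ t in (-L : ℝ)..(L : ℝ), ((φ t : ℝ):ℂ) * eI (θ * t))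
      = (∫ t in (-L : ℝ)..(0:ℝ), ((1 + 2*(N:ℝ)*t : ℝ):ℂ) * eI (θ * t))
        + ∫ t in (0 : ℝ)..(L:ℝ), ((1 - 2*(N:ℝ)*t : ℝ):ℂ) * eI (θ * t) := by
    rw [← intervalIntegral.integral_add_adjacent_intervals (hIntφ (-L) 0) (hIntφ 0 L), c1, c2]
  have hIntq : ∀ (q : ℝ → ℝ), Continuous q → ∀ a b : ℝ,
      IntervalIntegrable (fun t : ℝ => ((q t : ℝ):ℂ) * eI (θ*t)) volume a b := by
    intro q hq a b
    apply Continuous.intervalIntegrable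
    exact (Complex.continuous_ofReal.comp hq).mul
      (eI_continuous.comp (continuous_const.mul continuous_id))
  by_cases hj : j = 0
  · -- zero frequency
    have hθ0 : θ = 0 := by rw [hθdef, hj]; simp
    have heI : ∀ t : ℝ, eI (θ * t) = 1 := by
      intro t; rw [hθ0]; simp [eI]
    refine ⟨L, le_of_lt hL0, ?_⟩
    rw [step1, step2, split1, split2]
    simp only [heI, mul_one]
    rw [intervalIntegral.integral_ofReal, intervalIntegral.integral_ofReal]
    have hF1 : ∀ t : ℝ, HasDerivAt (fun t : ℝ => t + (N:ℝ)*t^2) (1 + 2*(N:ℝ)*t) t := by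
      intro t
      have : HasDerivAt (fun t : ℝ => t + (N:ℝ)*t^2) _ t := (hasDerivAt_id t).add (((hasDerivAt_pow 2 t)).const_mul (N:ℝ))
      convert this using 1
      simp; ring
    have hF2 : ∀ t : ℝ, HasDerivAt (fun t : ℝ => t - (N:ℝ)*t^2) (1 - 2*(N:ℝ)*t) t := by
      intro t
      have : HasDerivAt (fun t : ℝ => t - (N:ℝ)*t^2) _ t := (hasDerivAt_id t).sub (((hasDerivAt_pow 2 t)).const_mul (N:ℝ))
      convert this using 1
      simp; ring
    have r1 : (∫ t in (-L:ℝ)..(0:ℝ), (1 + 2*(N:ℝ)*t)) = L - (N:ℝ)*L^2 := by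
      rw [intervalIntegral.integral_eq_sub_of_hasDerivAt (fun t _ => hF1 t)
        ((by fun_prop : Continuous (fun t : ℝ => 1 + 2*(N:ℝ)*t)).intervalIntegrable _ _)]
      simp; ring
    have r2 : (∫ t in (0:ℝ)..(L:ℝ), (1 - 2*(N:ℝ)*t)) = L - (N:ℝ)*L^2 := by
      rw [intervalIntegral.integral_eq_sub_of_hasDerivAt (fun t _ => hF2 t)
        ((by fun_prop : Continuous (fun t : ℝ => 1 - 2*(N:ℝ)*t)).intervalIntegrable _ _)]
      simp
    rw [r1, r2]
    norm_cast
    linear_combination (-L) * h2NL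
  · -- nonzero frequency
    have hω : θ ≠ 0 := by
      rw [hθdef]
      exact mul_ne_zero (mul_ne_zero two_ne_zero Real.pi_ne_zero)
        (Int.cast_ne_zero.2 hj)
    have hωC : (θ:ℂ) ≠ 0 := Complex.ofReal_ne_zero.2 hω
    clear hθdef hLdef z1 z2 c1 c2 hIntφ hIntlin hφ
    clear_value θ L
    have hJp := intervalIntegral.integral_eq_sub_of_hasDerivAt (a := (0:ℝ)) (b := L)
      (f := fun t : ℝ => ((-2*(N:ℂ)/(θ:ℂ)^2 - Complex.I/(θ:ℂ)) + (2*(N:ℂ)*Complex.I/(θ:ℂ))*(t:ℂ)) * eI (θ*t))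
      (f' := fun t : ℝ => ((1 - 2*(N:ℝ)*t : ℝ):ℂ) * eI (θ*t))
      (fun t _ => by
        have h := poly_exp_deriv (-2*(N:ℂ)/(θ:ℂ)^2 - Complex.I/(θ:ℂ)) (2*(N:ℂ)*Complex.I/(θ:ℂ)) θ t
        rw [← coef_id_p N θ t hω] at h
        exact h)
      (hIntq (fun t => 1 - 2*(N:ℝ)*t) (by fun_prop) 0 L)
    have hJm := intervalIntegral.integral_eq_sub_of_hasDerivAt (a := (-L:ℝ)) (b := (0:ℝ))
      (f := fun t : ℝ => ((2*(N:ℂ)/(θ:ℂ)^2 - Complex.I/(θ:ℂ)) + (-2*(N:ℂ)*Complex.I/(θ:ℂ))*(t:ℂ)) * eI (θ*t))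
      (f' := fun t : ℝ => ((1 + 2*(N:ℝ)*t : ℝ):ℂ) * eI (θ*t))
      (fun t _ => by
        have h := poly_exp_deriv (2*(N:ℂ)/(θ:ℂ)^2 - Complex.I/(θ:ℂ)) (-2*(N:ℂ)*Complex.I/(θ:ℂ)) θ t
        rw [← coef_id_m N θ t hω] at h
        exact h)
      (hIntq (fun t => 1 + 2*(N:ℝ)*t) (by fun_prop) (-L) 0)
    have eI0 : eI (θ * 0) = 1 := by
      rw [mul_zero]; simp [eI]
    have hcos : eI (θ*L) + eI (θ*(-L)) = 2*((Real.cos (θ*L) : ℝ):ℂ) := by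
      unfold eI
      have hneg : ((θ*(-L) : ℝ):ℂ) = -((θ*L : ℝ):ℂ) := by push_cast; ring
      rw [hneg, Complex.exp_mul_I, Complex.exp_mul_I, Complex.cos_neg, Complex.sin_neg,
        Complex.ofReal_cos]
      ring
    refine ⟨4*(N:ℝ)/θ^2 * (1 - Real.cos (θ*L)), ?_, ?_⟩
    · apply mul_nonneg
      · positivity
      · linarith [Real.cos_le_one (θ*L)]
    have h2NLC : 2*(N:ℂ)*(L:ℂ) = 1 := by exact_mod_cast congrArg Complex.ofReal h2NL
    rw [step1, step2, split1, split2, hJm, hJp, eI0]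
    have hr : ((4*(N:ℝ)/θ^2*(1 - Real.cos (θ*L)) : ℝ) : ℂ)
        = 4*(N:ℂ)/(θ:ℂ)^2*(1-((Real.cos (θ*L):ℝ):ℂ)) := by push_cast; ring
    rw [hr]
    simp only [Complex.ofReal_zero, mul_zero, add_zero, mul_one, Complex.ofReal_neg]
    linear_combination (-2*(N:ℂ)/(θ:ℂ)^2) * hcos + (Complex.I/(θ:ℂ))*(eI (θ*L) - eI (θ*(-L))) * h2NLC

lemma eI_add_neg (x : ℝ) : eI x + eI (-x) = 2*((Real.cos x : ℝ):ℂ) := by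
  unfold eI
  push_cast
  rw [Complex.exp_mul_I, Complex.exp_mul_I, Complex.cos_neg, Complex.sin_neg]
  push_cast
  ring

/-- The building block of Bonami–Révész is positive definite: with `Δ` the
1-periodic triangle function `Δ(t) = max(1 − 2N|t|, 0)` (for `|t| ≤ 1/2`),
`g(t) = ∑_{k<n} η_k e^{2πikt}` for signs `η_k = ±1`, and `G = D_n` the Dirichlet
kernel, the function `f(t) = Δ(t−a) g(2Nt) + Δ(t+a) g(2Nt) + 2 Δ(t) G(2Nt)`
has all its Fourier coefficients nonnegative real. -/
theorem triangle_glued_polynomial_posdef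
    (N n : ℕ) (hN : 1 ≤ N) (hn : 1 ≤ n) (a : ℝ)
    (η : ℕ → ℝ) (hη : ∀ k < n, η k = 1 ∨ η k = -1)
    (Δ : ℝ → ℝ)
    (hΔ : ∀ t : ℝ, Δ t = max (1 - 2 * N * |t - (round t : ℝ)|) 0)
    (g G : ℝ → ℂ)
    (hg : ∀ t : ℝ, g t =
      ∑ k ∈ Finset.range n, (η k : ℂ) * Complex.exp (2 * Real.pi * Complex.I * (k : ℂ) * (t : ℂ)))
    (hG : ∀ t : ℝ, G t =
      ∑ k ∈ Finset.range n, Complex.exp (2 * Real.pi * Complex.I * (k : ℂ) * (t : ℂ)))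
    (f : ℝ → ℂ)
    (hf : ∀ t : ℝ, f t =
      (Δ (t - a) : ℂ) * g (2 * N * t) + (Δ (t + a) : ℂ) * g (2 * N * t)
        + 2 * (Δ t : ℂ) * G (2 * N * t)) :
    ∀ m : ℤ,
      0 ≤ (∫ t in (0 : ℝ)..1, f t * Complex.exp (-(2 * Real.pi * Complex.I * (m : ℂ) * (t : ℂ)))).re ∧
      (∫ t in (0 : ℝ)..1, f t * Complex.exp (-(2 * Real.pi * Complex.I * (m : ℂ) * (t : ℂ)))).im = 0 := by
  intro m
  have hΔtri : ∀ s : ℝ, Δ s = tri N s := by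
    intro s; rw [hΔ s]; rfl
  set j : ℕ → ℤ := fun k => 2*N*k - m with hjdef
  set x : ℕ → ℝ := fun k => 2*Real.pi*((j k : ℤ):ℝ) with hxdef
  set T : ℕ → ℝ → ℂ := fun k t =>
      (η k : ℂ) * ((tri N (t - a) : ℂ) * eI (x k * t))
      + (η k : ℂ) * ((tri N (t - (-a)) : ℂ) * eI (x k * t))
      + 2 * ((tri N (t - 0) : ℂ) * eI (x k * t)) with hT
  have hexp : ∀ (k : ℕ) (t : ℝ),
      Complex.exp (2*Real.pi*Complex.I*(k:ℂ)*((2*(N:ℝ)*t : ℝ):ℂ))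
        * Complex.exp (-(2*Real.pi*Complex.I*(m:ℂ)*(t:ℂ)))
        = eI (x k * t) := by
    intro k t
    rw [← Complex.exp_add]
    unfold eI
    congr 1
    have hcast : ((j k : ℤ) : ℂ) = 2*(N:ℂ)*(k:ℂ) - (m:ℂ) := by
      rw [hjdef]; push_cast; ring
    rw [hxdef]
    push_cast
    rw [hcast]
    ring
  have hpt : ∀ t : ℝ, f t * Complex.exp (-(2*Real.pi*Complex.I*(m:ℂ)*(t:ℂ)))
      = ∑ k ∈ Finset.range n, T k t := by
    intro t
    rw [hf t, hg, hG]
    simp only [hΔtri]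
    rw [Finset.mul_sum, Finset.mul_sum, Finset.mul_sum, add_mul, add_mul,
      Finset.sum_mul, Finset.sum_mul, Finset.sum_mul, ← Finset.sum_add_distrib,
      ← Finset.sum_add_distrib]
    apply Finset.sum_congr rfl
    intro k _
    rw [hT]
    simp only
    rw [← hexp k t]
    have h1 : t - (-a) = t + a := by ring
    have h2 : t - 0 = t := by ring
    rw [h1, h2]
    push_cast
    ring
  have hint : ∀ k ∈ Finset.range n, IntervalIntegrable (T k) volume 0 1 := by
    intro k _
    rw [hT]
    exact (((tri_eI_integrable N a (x k) 0 1).const_mul _).add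
      ((tri_eI_integrable N (-a) (x k) 0 1).const_mul _)).add
      ((tri_eI_integrable N 0 (x k) 0 1).const_mul _)
  have hsplit : (∫ t in (0:ℝ)..1, f t * Complex.exp (-(2*Real.pi*Complex.I*(m:ℂ)*(t:ℂ))))
      = ∑ k ∈ Finset.range n, ∫ t in (0:ℝ)..1, T k t := by
    rw [← intervalIntegral.integral_finset_sum (fun k hk => hint k hk)]
    apply intervalIntegral.integral_congr
    intro t _
    exact hpt t
  choose r hr0 hrC using fun k => tri_coef N hN (j k)
  have hTk : ∀ k : ℕ, (∫ t in (0:ℝ)..1, T k t)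
      = (2*(η k:ℂ)*((Real.cos (x k * a):ℝ):ℂ) + 2)*((r k:ℝ):ℂ) := by
    intro k
    rw [hT]
    simp only
    rw [intervalIntegral.integral_add
        (((tri_eI_integrable N a (x k) 0 1).const_mul _).add
          ((tri_eI_integrable N (-a) (x k) 0 1).const_mul _))
        ((tri_eI_integrable N 0 (x k) 0 1).const_mul _),
      intervalIntegral.integral_add
        ((tri_eI_integrable N a (x k) 0 1).const_mul _)
        ((tri_eI_integrable N (-a) (x k) 0 1).const_mul _),
      intervalIntegral.integral_const_mul, intervalIntegral.integral_const_mul,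
      intervalIntegral.integral_const_mul]
    have e1 : (∫ t in (0:ℝ)..1, (tri N (t - a) : ℂ) * eI (x k * t))
        = eI (x k * a) * ((r k : ℝ):ℂ) := by
      rw [hxdef]
      simp only
      rw [tri_shift N (j k) a, hrC k]
    have e2 : (∫ t in (0:ℝ)..1, (tri N (t - (-a)) : ℂ) * eI (x k * t))
        = eI (-(x k * a)) * ((r k : ℝ):ℂ) := by
      rw [hxdef]
      simp only
      rw [tri_shift N (j k) (-a), hrC k]
      congr 2
      ring
    have e3 : (∫ t in (0:ℝ)..1, (tri N (t - 0) : ℂ) * eI (x k * t))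
        = ((r k : ℝ):ℂ) := by
      rw [hxdef]
      simp only
      rw [tri_shift N (j k) 0, hrC k]
      have : eI (2*Real.pi*((j k : ℤ):ℝ)*0) = 1 := by
        rw [mul_zero]; simp [eI]
      rw [this, one_mul]
    rw [e1, e2, e3]
    have hc := eI_add_neg (x k * a)
    linear_combination ((η k : ℂ) * ((r k : ℝ):ℂ)) * hc
  have hfinal : (∫ t in (0:ℝ)..1, f t * Complex.exp (-(2*Real.pi*Complex.I*(m:ℂ)*(t:ℂ))))
      = ((∑ k ∈ Finset.range n, (2 * η k * Real.cos (x k * a) + 2) * r k : ℝ) : ℂ) := by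
    rw [hsplit]
    push_cast [-Complex.ofReal_cos]
    exact Finset.sum_congr rfl fun k _ => by rw [hTk k]
  rw [hfinal]
  constructor
  · rw [Complex.ofReal_re]
    apply Finset.sum_nonneg
    intro k hk
    apply mul_nonneg _ (hr0 k)
    rcases hη k (Finset.mem_range.mp hk) with h | h <;>
      rw [h] <;> nlinarith [Real.neg_one_le_cos (x k * a), Real.cos_le_one (x k * a)]
  · rw [Complex.ofReal_im]
end
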